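/- arXiv:1805.07174 — 2 statements merged into one kernel-verified Lean document; each statement's English description precedes it below -/
import Mathlib

section
/- Let $\mathrm K$ and $\mathrm K_{\mathrm{aug}}$ denote the MH and augmented MH transition operators restricted to the mean-zero subspaces $L^2_0(\mu)$ and $L^2_0(\nu)$ respectively. Then for all $n \geq 2$: $\|\mathrm K^n\|_{L^2_0(\mu)\to L^2_0(\mu)} \leq \|\mathrm K_{\mathrm{aug}}^{n-1}\|_{L^2_0(\nu)\to L^2_0(\nu)}$ and $\|\mathrm K_{\mathrm{aug}}^n\|_{L^2_0(\nu)\to L^2_0(\nu)} \leq \|\mathrm K^{n-1}\|_{L^2_0(\mu)\to L^2_0(\mu)}$. Moreover, $\|\mathrm K\|_{L^2_0(\mu)\to L^2_0(\mu)} \leq \|\mathrm K_{\mathrm{aug}}\|_{L^2_0(\nu)\to L^2_0(\nu)}$, and the spectral radius of $\mathrm K_{\mathrm{aug}}$ on $L^2_0(\nu)$ is at most $\|\mathrm K\|_{L^2_0(\mu)\to L^2_0(\mu)}$. -/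
set_option linter.unusedSectionVars false
set_option maxHeartbeats 1000000

open MeasureTheory ProbabilityTheory ENNReal Filter

lemma ofReal_norm_eq_coe_nnnorm (a : ℝ) : ENNReal.ofReal ‖a‖ = (‖a‖₊ : ℝ≥0∞) :=
  ENNReal.ofReal_eq_coe_nnreal _

lemma meas_mulp {X : Type*} [MeasurableSpace X] {f g : X → ℝ≥0∞} (hf : Measurable f)
    (hg : Measurable g) : Measurable fun a => f a * g a := hf.mul hg

namespace MHAux

variable {H H₂ : Type*} [MeasurableSpace H] [MeasurableSpace H₂]

lemma rpow_two' (a : ℝ≥0∞) : a ^ (2:ℝ) = a ^ (2:ℕ) := by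
  rw [← ENNReal.rpow_natCast a 2]; norm_num

noncomputable def kop (κ : Kernel H H₂) (f : H₂ → ℝ) : H → ℝ := fun x => ∫ z, f z ∂κ x

lemma l2norm (f : H → ℝ) (m : Measure H) :
    eLpNorm f 2 m = (∫⁻ x, (‖f x‖₊ : ℝ≥0∞) ^ 2 ∂m) ^ (1/2 : ℝ) := by
  rw [eLpNorm_eq_lintegral_rpow_enorm_toReal (by norm_num) (by norm_num)]
  simp only [ENNReal.toReal_ofNat, enorm_eq_nnnorm]
  congr 1
  refine lintegral_congr fun x => ?_
  rw [← ENNReal.rpow_natCast]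
  norm_num

lemma l2norm_mono {f : H → ℝ} {g : H₂ → ℝ} {m : Measure H} {m₂ : Measure H₂}
    (h : ∫⁻ x, (‖f x‖₊ : ℝ≥0∞) ^ 2 ∂m ≤ ∫⁻ x, (‖g x‖₊ : ℝ≥0∞) ^ 2 ∂m₂) :
    eLpNorm f 2 m ≤ eLpNorm g 2 m₂ := by
  rw [l2norm, l2norm]
  exact ENNReal.rpow_le_rpow h (by norm_num)

/-- marginal of compProd on the second coordinate is bind -/
lemma map_snd_compProd (m : Measure H) [SFinite m] (κ : Kernel H H₂) [IsMarkovKernel κ] :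
    (m.compProd κ).map Prod.snd = m.bind κ := by
  ext s hs
  rw [Measure.map_apply measurable_snd hs, Measure.compProd_apply (measurable_snd hs),
    Measure.bind_apply hs (Kernel.measurable κ).aemeasurable]
  rfl


section Bind

variable (κ : Kernel H H) [IsMarkovKernel κ] (m : Measure H) [IsProbabilityMeasure m]

lemma ae_bind (hinv : m.bind κ = m) {prop : H → Prop} (hp : ∀ᵐ z ∂m, prop z) :
    ∀ᵐ x ∂m, ∀ᵐ z ∂κ x, prop z := by
  set N := toMeasurable m {z | ¬ prop z} with hNdef
  have hNmeas : MeasurableSet N := measurableSet_toMeasurable _ _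
  have hN0 : m N = 0 := by
    rw [hNdef, measure_toMeasurable]
    exact ae_iff.mp hp
  have h0 : ∫⁻ x, κ x N ∂m = 0 := by
    have := congrArg (fun ms : Measure H => ms N) hinv
    simpa [Measure.bind_apply hNmeas (Kernel.measurable κ).aemeasurable, hN0] using this
  have h2 : ∀ᵐ x ∂m, κ x N = 0 :=
    (lintegral_eq_zero_iff (Kernel.measurable_coe κ hNmeas)).mp h0
  filter_upwards [h2] with x hx
  refine ae_iff.mpr (measure_mono_null ?_ hx)
  exact fun z hz => subset_toMeasurable m _ hz

lemma kop_congr_ae (hinv : m.bind κ = m) {f g : H → ℝ} (h : f =ᵐ[m] g) :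
    kop κ f =ᵐ[m] kop κ g := by
  filter_upwards [ae_bind κ m hinv h] with x hx using integral_congr_ae hx

lemma integrable_ae_bind (hinv : m.bind κ = m) {f : H → ℝ} (hf : Integrable f m) :
    ∀ᵐ x ∂m, Integrable f (κ x) := by
  obtain ⟨f', hf'sm, hff'⟩ : ∃ f', StronglyMeasurable f' ∧ f =ᵐ[m] f' :=
    ⟨hf.1.mk f, hf.1.stronglyMeasurable_mk, hf.1.ae_eq_mk⟩
  have h1 : ∀ᵐ x ∂m, f =ᵐ[κ x] f' := ae_bind κ m hinv hff'
  have hfin : ∫⁻ x, ∫⁻ z, (‖f' z‖₊ : ℝ≥0∞) ∂κ x ∂m ≠ ∞ := by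
    have he : (fun z => (‖f' z‖₊ : ℝ≥0∞)) =ᵐ[m] (fun z => (‖f z‖₊ : ℝ≥0∞)) :=
      hff'.mono fun z hz => by simp [hz]
    rw [← Measure.lintegral_bind (Kernel.measurable κ).aemeasurable hf'sm.measurable.nnnorm.coe_nnreal_ennreal.aemeasurable, hinv,
      lintegral_congr_ae he]
    exact hf.2.ne
  have h2 : ∀ᵐ x ∂m, ∫⁻ z, (‖f' z‖₊ : ℝ≥0∞) ∂κ x < ∞ :=
    ae_lt_top (Measurable.lintegral_kernel_prod_right
      (hf'sm.measurable.nnnorm.coe_nnreal_ennreal.comp measurable_snd)) hfin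
  filter_upwards [h1, h2] with x hx1 hx2
  exact (Integrable.congr ⟨hf'sm.aestronglyMeasurable, hx2⟩ hx1.symm)

end Bind

section Kop

lemma kop_sm {f : H₂ → ℝ} (hf : StronglyMeasurable f) (κ : Kernel H H₂) [IsSFiniteKernel κ] :
    StronglyMeasurable (kop κ f) :=
  StronglyMeasurable.integral_kernel_prod_right (f := fun _ y => f y)
    (hf.comp_measurable measurable_snd)

lemma sq_int_le (m : Measure H₂) [IsProbabilityMeasure m] (f : H₂ → ℝ) :
    (‖∫ z, f z ∂m‖₊ : ℝ≥0∞) ^ 2 ≤ ∫⁻ z, (‖f z‖₊ : ℝ≥0∞) ^ 2 ∂m := by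
  by_cases hmeas : AEStronglyMeasurable f m
  swap
  · rw [integral_non_aestronglyMeasurable hmeas]
    simp
  have h1 : (‖∫ z, f z ∂m‖₊ : ℝ≥0∞) ≤ ∫⁻ z, ‖f z‖₊ ∂m := enorm_integral_le_lintegral_enorm _
  have h2 : ∫⁻ z, (‖f z‖₊ : ℝ≥0∞) ∂m ≤ (∫⁻ z, (‖f z‖₊ : ℝ≥0∞) ^ (2:ℝ) ∂m) ^ (1/2:ℝ) := by
    have := ENNReal.lintegral_mul_le_Lp_mul_Lq m
      (Real.HolderConjugate.two_two)
      (f := fun z => (‖f z‖₊ : ℝ≥0∞)) (g := fun _ => 1)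
      hmeas.aemeasurable.nnnorm.coe_nnreal_ennreal aemeasurable_const
    simpa using this
  calc (‖∫ z, f z ∂m‖₊ : ℝ≥0∞) ^ 2 ≤ ((∫⁻ z, (‖f z‖₊ : ℝ≥0∞) ^ (2:ℝ) ∂m) ^ (1/2:ℝ)) ^ 2 := by
        exact pow_le_pow_left' (h1.trans h2) 2
    _ = ∫⁻ z, (‖f z‖₊ : ℝ≥0∞) ^ 2 ∂m := by
        rw [← rpow_two' _, ← ENNReal.rpow_mul]
        norm_num [rpow_two']

lemma kop_sq_le (κ : Kernel H H₂) [IsMarkovKernel κ] (f : H₂ → ℝ) (x : H) :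
    (‖kop κ f x‖₊ : ℝ≥0∞) ^ 2 ≤ ∫⁻ z, (‖f z‖₊ : ℝ≥0∞) ^ 2 ∂κ x :=
  sq_int_le (κ x) f

lemma convex_sq (t a b : ℝ) (h0 : 0 ≤ t) (h1 : t ≤ 1) :
    (‖t * a + (1 - t) * b‖₊ : ℝ≥0∞) ^ 2 ≤
      ENNReal.ofReal t * (‖a‖₊ : ℝ≥0∞) ^ 2 + ENNReal.ofReal (1 - t) * (‖b‖₊ : ℝ≥0∞) ^ 2 := by
  have e : ∀ v : ℝ, (‖v‖₊ : ℝ≥0∞) ^ 2 = ENNReal.ofReal (v ^ 2) := fun v => by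
    rw [← ofReal_norm_eq_coe_nnnorm, ← ENNReal.ofReal_pow (norm_nonneg v),
      Real.norm_eq_abs, sq_abs]
  rw [e, e, e, ← ENNReal.ofReal_mul h0, ← ENNReal.ofReal_mul (by linarith : (0:ℝ) ≤ 1 - t),
    ← ENNReal.ofReal_add (mul_nonneg h0 (sq_nonneg a))
      (mul_nonneg (by linarith : (0:ℝ) ≤ 1 - t) (sq_nonneg b))]
  refine ENNReal.ofReal_le_ofReal ?_
  nlinarith [mul_nonneg (mul_nonneg h0 (by linarith : (0:ℝ) ≤ 1 - t)) (sq_nonneg (a - b))]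

lemma nnnorm_sq_eq_ofReal (v : ℝ) : (‖v‖₊ : ℝ≥0∞) ^ 2 = ENNReal.ofReal (v * v) := by
  rw [← ofReal_norm_eq_coe_nnnorm, ← ENNReal.ofReal_pow (norm_nonneg v),
    Real.norm_eq_abs]
  rw [show |v| ^ 2 = v * v by rw [sq_abs]; ring]

lemma l2fin {f : H → ℝ} {m : Measure H} (hf : MemLp f 2 m) :
    ∫⁻ x, (‖f x‖₊ : ℝ≥0∞) ^ 2 ∂m ≠ ∞ := by
  intro hcon
  have h := hf.2
  rw [l2norm, hcon] at h
  simp [ENNReal.top_rpow_of_pos (by norm_num : (0:ℝ) < 1/2)] at h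

lemma l2_mul_int (m : Measure H) (u v : H → ℝ) (hu : MemLp u 2 m) (hv : MemLp v 2 m) :
    Integrable (fun x => u x * v x) m := by
  refine ((hu.integrable_sq.add hv.integrable_sq).div_const 2).mono'
    (hu.1.mul hv.1) (ae_of_all _ fun x => ?_)
  rw [Real.norm_eq_abs, abs_mul]
  show |u x| * |v x| ≤ (u x ^ 2 + v x ^ 2) / 2
  nlinarith [sq_nonneg (|u x| - |v x|), abs_nonneg (u x), abs_nonneg (v x),
    sq_abs (u x), sq_abs (v x)]

lemma csE {u v : H → ℝ} {m : Measure H} (hu : AEStronglyMeasurable u m)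
    (hv : AEStronglyMeasurable v m) :
    ∫⁻ x, (‖u x‖₊ : ℝ≥0∞) * (‖v x‖₊ : ℝ≥0∞) ∂m ≤ eLpNorm u 2 m * eLpNorm v 2 m := by
  have h := ENNReal.lintegral_mul_le_Lp_mul_Lq m
    (Real.HolderConjugate.two_two)
    (f := fun x => (‖u x‖₊ : ℝ≥0∞)) (g := fun x => (‖v x‖₊ : ℝ≥0∞))
    hu.aemeasurable.nnnorm.coe_nnreal_ennreal hv.aemeasurable.nnnorm.coe_nnreal_ennreal
  have e : ∀ w : H → ℝ, ∫⁻ x, ((‖w x‖₊ : ℝ≥0∞)) ^ (2:ℝ) ∂m =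
      ∫⁻ x, ((‖w x‖₊ : ℝ≥0∞)) ^ 2 ∂m := fun w => lintegral_congr fun x => rpow_two' _
  rw [l2norm, l2norm, ← e u, ← e v]
  exact h

lemma cs (m : Measure H) (u v : H → ℝ) (hu : MemLp u 2 m) (hv : MemLp v 2 m) :
    ENNReal.ofReal (∫ x, u x * v x ∂m) ≤ eLpNorm u 2 m * eLpNorm v 2 m := by
  have hint : Integrable (fun x => u x * v x) m := l2_mul_int m u v hu hv
  have h1 : ∫ x, u x * v x ∂m ≤ ∫ x, |u x * v x| ∂m :=
    integral_mono hint hint.abs fun x => le_abs_self _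
  calc ENNReal.ofReal (∫ x, u x * v x ∂m) ≤ ENNReal.ofReal (∫ x, |u x * v x| ∂m) :=
        ENNReal.ofReal_le_ofReal h1
    _ = ∫⁻ x, ENNReal.ofReal |u x * v x| ∂m :=
        ofReal_integral_eq_lintegral_ofReal hint.abs (ae_of_all _ fun x => abs_nonneg _)
    _ = ∫⁻ x, (‖u x‖₊ : ℝ≥0∞) * (‖v x‖₊ : ℝ≥0∞) ∂m := by
        refine lintegral_congr fun x => ?_
        rw [← Real.norm_eq_abs, ofReal_norm_eq_coe_nnnorm, nnnorm_mul, ENNReal.coe_mul]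
    _ ≤ eLpNorm u 2 m * eLpNorm v 2 m := csE hu.1 hv.1

lemma elp_sq_int (u : H → ℝ) (m : Measure H) (hu : MemLp u 2 m) :
    (eLpNorm u 2 m) ^ 2 = ENNReal.ofReal (∫ x, u x * u x ∂m) := by
  have hsq : Integrable (fun x => u x * u x) m := l2_mul_int m u u hu hu
  rw [l2norm, ← ENNReal.rpow_natCast _ 2, ← ENNReal.rpow_mul]
  norm_num
  rw [ofReal_integral_eq_lintegral_ofReal hsq (ae_of_all _ fun x => mul_self_nonneg _)]
  exact lintegral_congr fun x => nnnorm_sq_eq_ofReal (u x)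

lemma seq_real (A : ℕ → ℝ) (C : ℝ) (hA : ∀ k, 0 ≤ A k) (hC : 0 ≤ C)
    (hmono : A 1 ≤ A 0)
    (hconv : ∀ k, A (k+1) ^ 2 ≤ A k * A (k+2))
    (hbd : ∀ n, 1 ≤ n → A (n+1) ≤ C ^ n * A 0) : A 1 ≤ C * A 0 := by
  have claim1 : ∀ k, A 1 * A (k+1) ≤ A 0 * A (k+2) := by
    intro k
    induction k with
    | zero =>
      have := hconv 0
      nlinarith [hA 1]
    | succ k ih =>
      by_cases h0 : A (k+2) = 0
      · rw [h0, mul_zero]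
        exact mul_nonneg (hA 0) (hA (k+3))
      · have hpos : 0 < A (k+2) := lt_of_le_of_ne (hA _) (Ne.symm h0)
        have h1 : A 1 * A (k+2) * A (k+2) ≤ A 0 * A (k+3) * A (k+2) := by
          have hc := hconv (k+1)
          nlinarith [hA 1, hA 0, hA (k+3), hA (k+1)]
        exact le_of_mul_le_mul_right h1 hpos
  have claim2 : ∀ k, A 1 ^ (k+1) ≤ A 0 ^ k * A (k+1) := by
    intro k
    induction k with
    | zero => simpa using le_refl (A 1)
    | succ k ih =>
      calc A 1 ^ (k+2) = A 1 ^ (k+1) * A 1 := by ring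
        _ ≤ (A 0 ^ k * A (k+1)) * A 1 := mul_le_mul_of_nonneg_right ih (hA 1)
        _ = A 0 ^ k * (A 1 * A (k+1)) := by ring
        _ ≤ A 0 ^ k * (A 0 * A (k+2)) :=
            mul_le_mul_of_nonneg_left (claim1 k) (pow_nonneg (hA 0) k)
        _ = A 0 ^ (k+1) * A (k+2) := by ring
  have claim3 : ∀ n, 1 ≤ n → A 1 ^ (n+1) ≤ (C * A 0) ^ n * A 0 := by
    intro n hn
    calc A 1 ^ (n+1) ≤ A 0 ^ n * A (n+1) := claim2 n
      _ ≤ A 0 ^ n * (C ^ n * A 0) := mul_le_mul_of_nonneg_left (hbd n hn) (pow_nonneg (hA 0) n)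
      _ = (C * A 0) ^ n * A 0 := by rw [mul_pow]; ring
  by_cases hA0 : A 0 = 0
  · have h2 := claim3 1 le_rfl
    rw [hA0] at h2 ⊢
    simp only [mul_zero, zero_pow, pow_succ] at h2 ⊢
    nlinarith [hA 1, sq_nonneg (A 1)]
  have hA0pos : 0 < A 0 := lt_of_le_of_ne (hA 0) (Ne.symm hA0)
  by_cases hC0 : C = 0
  · have h2 := claim3 1 le_rfl
    rw [hC0] at h2 ⊢
    simp at h2 ⊢
    nlinarith [hA 1, sq_nonneg (A 1)]
  have hCpos : 0 < C := lt_of_le_of_ne hC (Ne.symm hC0)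
  by_contra hcon
  push_neg at hcon
  have hCApos : 0 < C * A 0 := mul_pos hCpos hA0pos
  set t := A 1 / (C * A 0) with htdef
  have ht : 1 < t := (one_lt_div hCApos).mpr hcon
  have hub : ∀ n, 1 ≤ n → t ^ (n+1) ≤ 1 / C := by
    intro n hn
    have h3 := claim3 n hn
    rw [htdef, div_pow]
    rw [div_le_div_iff₀ (pow_pos hCApos (n+1)) hCpos]
    calc A 1 ^ (n+1) * C ≤ ((C * A 0) ^ n * A 0) * C :=
          mul_le_mul_of_nonneg_right h3 hC
      _ = (C * A 0) ^ (n+1) * 1 := by rw [pow_succ]; ring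
      _ = 1 * (C * A 0) ^ (n+1) := by ring
  obtain ⟨n, hn⟩ := ((tendsto_pow_atTop_atTop_of_one_lt ht).eventually_gt_atTop (1 / C)).exists
  rcases n with _ | m
  · rw [pow_zero, one_div] at hn
    have hC1 : 1 < C := by
      have h2 := mul_lt_mul_of_pos_left hn hCpos
      rwa [mul_inv_cancel₀ hC0, mul_one] at h2
    nlinarith [hmono, hcon, hA0pos]
  · rcases m with _ | k
    · -- n = 1 : t ^ 1 > 1/C, but t = A1/(CA0) and A1 ≤ A0 so t ≤ A0/(CA0) = 1/C
      rw [pow_one] at hn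
      have : t ≤ 1 / C := by
        rw [htdef, div_le_div_iff₀ hCApos hCpos]
        calc A 1 * C ≤ A 0 * C := mul_le_mul_of_nonneg_right hmono hC
          _ = 1 * (C * A 0) := by ring
      linarith
    · exact absurd hn (not_lt.mpr (hub (k+1) (by omega)))

lemma mul_le_sq_add (a b : ℝ≥0∞) : a * b ≤ a ^ 2 + b ^ 2 := by
  rcases le_total a b with h | h
  · calc a * b ≤ b * b := mul_le_mul_left h b
      _ = b ^ 2 := (sq b).symm
      _ ≤ a ^ 2 + b ^ 2 := le_add_self
  · calc a * b ≤ a * a := mul_le_mul_right h a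
      _ = a ^ 2 := (sq a).symm
      _ ≤ a ^ 2 + b ^ 2 := le_self_add

end Kop


section KopInv

variable (κ : Kernel H H) [IsMarkovKernel κ] (m : Measure H) [IsProbabilityMeasure m]

lemma kop_l2_facts (hinv : m.bind κ = m) {f : H → ℝ} (hf : MemLp f 2 m) :
    MemLp (kop κ f) 2 m ∧ eLpNorm (kop κ f) 2 m ≤ eLpNorm f 2 m ∧
      ∫ x, kop κ f x ∂m = ∫ x, f x ∂m := by
  obtain ⟨f', hf'sm, hff'⟩ : ∃ f', StronglyMeasurable f' ∧ f =ᵐ[m] f' :=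
    ⟨hf.1.mk f, hf.1.stronglyMeasurable_mk, hf.1.ae_eq_mk⟩
  have hmem' : MemLp f' 2 m := hf.ae_eq hff'
  have hkk : kop κ f =ᵐ[m] kop κ f' := kop_congr_ae κ m hinv hff'
  have hc : ∫⁻ x, (‖kop κ f' x‖₊ : ℝ≥0∞) ^ 2 ∂m ≤ ∫⁻ x, (‖f' x‖₊ : ℝ≥0∞) ^ 2 ∂m := by
    calc ∫⁻ x, (‖kop κ f' x‖₊ : ℝ≥0∞) ^ 2 ∂m ≤ ∫⁻ x, ∫⁻ z, (‖f' z‖₊ : ℝ≥0∞) ^ 2 ∂κ x ∂m :=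
          lintegral_mono fun x => kop_sq_le κ f' x
      _ = ∫⁻ z, (‖f' z‖₊ : ℝ≥0∞) ^ 2 ∂(m.bind κ) :=
          (Measure.lintegral_bind (Kernel.measurable κ).aemeasurable (hf'sm.measurable.nnnorm.coe_nnreal_ennreal.pow_const 2).aemeasurable).symm
      _ = _ := by rw [hinv]
  have hnorm : eLpNorm (kop κ f) 2 m ≤ eLpNorm f 2 m := by
    rw [eLpNorm_congr_ae hkk, eLpNorm_congr_ae hff']
    exact l2norm_mono hc
  have hmeml : MemLp (kop κ f) 2 m := by
    refine ⟨(kop_sm hf'sm κ).aestronglyMeasurable.congr hkk.symm, ?_⟩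
    exact lt_of_le_of_lt hnorm hf.2
  refine ⟨hmeml, hnorm, ?_⟩
  have hint : Integrable f m := hf.integrable one_le_two
  have hint' : Integrable f' m := hint.congr hff'
  have h1 : ∫ x, kop κ f x ∂m = ∫ x, kop κ f' x ∂m := integral_congr_ae hkk
  have hx' : Integrable f' ((m.compProd κ).map Prod.snd) := by
    rw [map_snd_compProd m κ, hinv]; exact hint'
  have hsnd : Integrable (fun q : H × H => f' q.2) (m.compProd κ) :=
    (integrable_map_measure hx'.1 measurable_snd.aemeasurable).mp hx'
  have h2 : ∫ x, kop κ f' x ∂m = ∫ q : H × H, f' q.2 ∂(m.compProd κ) :=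
    (MeasureTheory.Measure.integral_compProd hsnd).symm
  have h3 : ∫ q : H × H, f' q.2 ∂(m.compProd κ) = ∫ z, f' z ∂((m.compProd κ).map Prod.snd) :=
    (integral_map measurable_snd.aemeasurable hx'.1).symm
  rw [h1, h2, h3, map_snd_compProd m κ, hinv]
  exact integral_congr_ae hff'.symm

lemma kop_comp (κa κb : Kernel H H) [IsMarkovKernel κa] [IsMarkovKernel κb]
    (hinv : m.bind (κb ∘ₖ κa) = m) {f : H → ℝ} (hf : Integrable f m) :
    kop (κb ∘ₖ κa) f =ᵐ[m] kop κa (kop κb f) := by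
  have hint : ∀ᵐ x ∂m, Integrable f ((κb ∘ₖ κa) x) := integrable_ae_bind _ m hinv hf
  filter_upwards [hint] with x hx
  have hbind : (κb ∘ₖ κa) x = ((κa x).compProd κb).map Prod.snd := by
    rw [Kernel.comp_apply, ← map_snd_compProd (κa x) κb]
  have hx' : Integrable f (((κa x).compProd κb).map Prod.snd) := by rw [← hbind]; exact hx
  have hsnd : Integrable (fun q : H × H => f q.2) ((κa x).compProd κb) :=
    (integrable_map_measure hx'.1 measurable_snd.aemeasurable).mp hx'
  calc kop (κb ∘ₖ κa) f x = ∫ z, f z ∂(((κa x).compProd κb).map Prod.snd) := by rw [kop, hbind]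
    _ = ∫ q : H × H, f q.2 ∂((κa x).compProd κb) := integral_map measurable_snd.aemeasurable hx'.1
    _ = ∫ y, ∫ z, f z ∂κb y ∂κa x := MeasureTheory.Measure.integral_compProd hsnd
    _ = kop κa (kop κb f) x := rfl

end KopInv

section Iter

variable (κ : Kernel H H) [IsMarkovKernel κ] (KS : ℕ → Kernel H H)
  (m : Measure H) [IsProbabilityMeasure m]

lemma iter_markov (h1 : KS 1 = κ) (hsucc : ∀ n, 1 ≤ n → KS (n + 1) = κ ∘ₖ KS n) :
    ∀ n, 1 ≤ n → IsMarkovKernel (KS n) := by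
  intro n hn
  induction n with
  | zero => omega
  | succ k ih =>
    rcases Nat.eq_or_lt_of_le hn with h | h
    · rw [show k + 1 = 1 by omega, h1]; infer_instance
    · have hk : 1 ≤ k := by omega
      haveI := ih hk
      rw [hsucc k hk]; infer_instance

lemma iter_inv (h1 : KS 1 = κ) (hsucc : ∀ n, 1 ≤ n → KS (n + 1) = κ ∘ₖ KS n)
    (hinv : m.bind κ = m) : ∀ n, 1 ≤ n → m.bind (KS n) = m := by
  intro n hn
  induction n with
  | zero => omega
  | succ k ih =>
    rcases Nat.eq_or_lt_of_le hn with h | h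
    · rw [show k + 1 = 1 by omega, h1, hinv]
    · have hk : 1 ≤ k := by omega
      haveI := iter_markov κ KS h1 hsucc k hk
      have : ⇑(KS (k + 1)) = fun a => (KS k a).bind κ := by
        funext a; rw [hsucc k hk, Kernel.comp_apply]
      rw [this, ← Measure.bind_bind (Kernel.measurable (KS k)).aemeasurable (Kernel.measurable κ).aemeasurable,
        ih hk, hinv]

lemma iter_step_ae (h1 : KS 1 = κ) (hsucc : ∀ n, 1 ≤ n → KS (n + 1) = κ ∘ₖ KS n)
    (hinv : m.bind κ = m) (n : ℕ) (hn : 1 ≤ n) {f : H → ℝ} (hf : Integrable f m) :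
    kop (KS (n+1)) f =ᵐ[m] kop (KS n) (kop κ f) := by
  haveI := iter_markov κ KS h1 hsucc n hn
  have hinv' : m.bind (KS (n+1)) = m := iter_inv κ KS m h1 hsucc hinv (n+1) (by omega)
  rw [hsucc n hn] at hinv' ⊢
  exact kop_comp m (KS n) κ hinv' hf

lemma iter_l2 (h1 : KS 1 = κ) (hsucc : ∀ n, 1 ≤ n → KS (n + 1) = κ ∘ₖ KS n)
    (hinv : m.bind κ = m) (n : ℕ) (hn : 1 ≤ n) {f : H → ℝ} (hf : MemLp f 2 m) :
    MemLp (kop (KS n) f) 2 m ∧ eLpNorm (kop (KS n) f) 2 m ≤ eLpNorm f 2 m ∧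
      ∫ x, kop (KS n) f x ∂m = ∫ x, f x ∂m := by
  haveI := iter_markov κ KS h1 hsucc n hn
  exact kop_l2_facts (KS n) m (iter_inv κ KS m h1 hsucc hinv n hn) hf

lemma iter_bound (h1 : KS 1 = κ) (hsucc : ∀ n, 1 ≤ n → KS (n + 1) = κ ∘ₖ KS n)
    (hinv : m.bind κ = m) (c : ℝ)
    (hstep : ∀ f : H → ℝ, MemLp f 2 m → ∫ x, f x ∂m = 0 →
      eLpNorm (kop κ f) 2 m ≤ ENNReal.ofReal c * eLpNorm f 2 m) :
    ∀ n, 1 ≤ n → ∀ f : H → ℝ, MemLp f 2 m → ∫ x, f x ∂m = 0 →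
      eLpNorm (kop (KS n) f) 2 m ≤ (ENNReal.ofReal c) ^ n * eLpNorm f 2 m := by
  intro n hn
  induction n with
  | zero => omega
  | succ k ih =>
    intro f hf hf0
    rcases Nat.eq_or_lt_of_le hn with h | h
    · rw [show k + 1 = 1 by omega, h1, pow_one]
      exact hstep f hf hf0
    · have hk : 1 ≤ k := by omega
      obtain ⟨hm1, hn1, hmean1⟩ := kop_l2_facts κ m hinv hf
      have hmean0 : ∫ x, kop κ f x ∂m = 0 := by rw [hmean1, hf0]
      have hstepae := iter_step_ae κ KS m h1 hsucc hinv k hk (hf.integrable one_le_two)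
      calc eLpNorm (kop (KS (k+1)) f) 2 m = eLpNorm (kop (KS k) (kop κ f)) 2 m :=
            eLpNorm_congr_ae hstepae
        _ ≤ (ENNReal.ofReal c) ^ k * eLpNorm (kop κ f) 2 m := ih hk (kop κ f) hm1 hmean0
        _ ≤ (ENNReal.ofReal c) ^ k * (ENNReal.ofReal c * eLpNorm f 2 m) :=
            mul_le_mul_right (hstep f hf hf0) _
        _ = (ENNReal.ofReal c) ^ (k+1) * eLpNorm f 2 m := by ring

end Iter

section MH

variable {G : Type*} [MeasurableSpace G]
  (μ₀ : Measure G) [SigmaFinite μ₀]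
  (ρ : G → ℝ) (Z : ℝ)
  (μ : Measure G) [SFinite μ]
  (P : Kernel G G) [IsMarkovKernel P]
  (p : G → G → ℝ)
  (r : G → G → ℝ)
  (α : G → G → ℝ)
  (ν : Measure (G × G))

variable (hρm : Measurable ρ) (hρ0 : ∀ x, 0 ≤ ρ x) (hρint : Integrable ρ μ₀)
  (hZ : Z = ∫ x, ρ x ∂μ₀) (hZpos : 0 < Z)
  (hμ : μ = μ₀.withDensity fun x => ENNReal.ofReal (ρ x / Z))
  (hpm : Measurable (Function.uncurry p)) (hp0 : ∀ x y, 0 ≤ p x y)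
  (hP : ∀ x, P x = μ₀.withDensity fun y => ENNReal.ofReal (p x y))
  (hpos : ∀ x y, 0 < ρ y → 0 < p x y)
  (hr : ∀ x y, r x y = if 0 < ρ x * p x y then ρ y * p y x / (ρ x * p x y) else 1)
  (hα : ∀ x y, α x y = min 1 (r x y))
  (hν : ν = μ.compProd P)

noncomputable def qop (g : G × G → ℝ) : G → ℝ := fun x => ∫ y, g (x, y) ∂P x

noncomputable def top (f : G → ℝ) : G × G → ℝ :=
  fun q => α q.1 q.2 * f q.2 + (1 - α q.1 q.2) * f q.1

section Alpha

include hr hα hρ0 hp0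

lemma alpha_nonneg (x y : G) : 0 ≤ α x y := by
  rw [hα, hr]
  rcases lt_or_ge 0 (ρ x * p x y) with h | h
  · rw [if_pos h]
    exact le_min zero_le_one (div_nonneg (mul_nonneg (hρ0 y) (hp0 y x)) h.le)
  · rw [if_neg (by linarith)]
    norm_num

lemma alpha_le_one (x y : G) : α x y ≤ 1 := by rw [hα]; exact min_le_left _ _

lemma alpha_db (x y : G) : ρ x * p x y * α x y = ρ y * p y x * α y x := by
  have ha0 : 0 ≤ ρ x * p x y := mul_nonneg (hρ0 x) (hp0 x y)
  have hb0 : 0 ≤ ρ y * p y x := mul_nonneg (hρ0 y) (hp0 y x)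
  rw [hα x y, hα y x, hr x y, hr y x]
  rcases lt_or_eq_of_le ha0 with ha | ha
  · rcases lt_or_eq_of_le hb0 with hb | hb
    · rw [if_pos ha, if_pos hb, mul_min_of_nonneg _ _ ha0, mul_min_of_nonneg _ _ hb0,
        mul_one, mul_one, mul_div_cancel₀ _ ha.ne', mul_div_cancel₀ _ hb.ne', min_comm]
    · rw [if_pos ha, if_neg (by rw [← hb]; exact lt_irrefl 0), ← hb]
      simp
  · rcases lt_or_eq_of_le hb0 with hb | hb
    · rw [if_neg (by rw [← ha]; exact lt_irrefl 0), if_pos hb, ← ha]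
      simp
    · rw [← ha, ← hb]

end Alpha

lemma alpha_meas (hpm : Measurable (Function.uncurry p)) (hρm : Measurable ρ)
    (hr : ∀ x y, r x y = if 0 < ρ x * p x y then ρ y * p y x / (ρ x * p x y) else 1)
    (hα : ∀ x y, α x y = min 1 (r x y)) :
    Measurable (fun q : G × G => α q.1 q.2) := by
  have h1 : Measurable (fun q : G × G => ρ q.1 * p q.1 q.2) :=
    (hρm.comp measurable_fst).mul hpm
  have h2 : Measurable (fun q : G × G => ρ q.2 * p q.2 q.1) :=
    (hρm.comp measurable_snd).mul (hpm.comp measurable_swap)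
  have : (fun q : G × G => α q.1 q.2) = fun q : G × G =>
      min 1 (if 0 < ρ q.1 * p q.1 q.2 then ρ q.2 * p q.2 q.1 / (ρ q.1 * p q.1 q.2) else 1) := by
    funext q; rw [hα, hr]
  rw [this]
  exact measurable_const.min
    (Measurable.ite (measurableSet_lt measurable_const h1) (h2.div h1) measurable_const)

/-- workhorse: lintegral against ν as double lintegral over μ₀ -/
lemma lint_nu (F : G × G → ℝ≥0∞) (hF : Measurable F)
    (hρm : Measurable ρ) (hpm : Measurable (Function.uncurry p))
    (hμ : μ = μ₀.withDensity fun x => ENNReal.ofReal (ρ x / Z))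
    (hP : ∀ x, P x = μ₀.withDensity fun y => ENNReal.ofReal (p x y))
    (hν : ν = μ.compProd P) :
    ∫⁻ q, F q ∂ν =
      ∫⁻ x, ∫⁻ y, ENNReal.ofReal (ρ x / Z) * (ENNReal.ofReal (p x y) * F (x, y)) ∂μ₀ ∂μ₀ := by
  have hinner : Measurable fun x => ∫⁻ y, F (x, y) ∂P x :=
    Measurable.lintegral_kernel_prod_right' hF
  subst hν
  rw [Measure.lintegral_compProd hF, hμ,
    lintegral_withDensity_eq_lintegral_mul μ₀ (hρm.div_const Z).ennreal_ofReal hinner]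
  refine lintegral_congr fun x => ?_
  simp only [Pi.mul_apply]
  have hp1 : Measurable fun y => ENNReal.ofReal (p x y) :=
    (hpm.comp measurable_prodMk_left).ennreal_ofReal
  have hF1 : Measurable fun y => F (x, y) := hF.comp measurable_prodMk_left
  rw [hP x, lintegral_withDensity_eq_lintegral_mul μ₀ hp1 hF1]
  simp only [Pi.mul_apply]
  rw [← lintegral_const_mul _ (meas_mulp hp1 hF1)]

lemma coeff_db (hρ0 : ∀ x, 0 ≤ ρ x) (hp0 : ∀ x y, 0 ≤ p x y)
    (hr : ∀ x y, r x y = if 0 < ρ x * p x y then ρ y * p y x / (ρ x * p x y) else 1)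
    (hα : ∀ x y, α x y = min 1 (r x y)) (hZpos : 0 < Z) (x y : G) :
    ENNReal.ofReal (ρ x / Z) * (ENNReal.ofReal (p x y) * ENNReal.ofReal (α x y)) =
      ENNReal.ofReal (ρ y / Z) * (ENNReal.ofReal (p y x) * ENNReal.ofReal (α y x)) := by
  rw [← ENNReal.ofReal_mul (hp0 x y), ← ENNReal.ofReal_mul (div_nonneg (hρ0 x) hZpos.le),
    ← ENNReal.ofReal_mul (hp0 y x), ← ENNReal.ofReal_mul (div_nonneg (hρ0 y) hZpos.le)]
  congr 1
  have h := alpha_db ρ p r α hρ0 hp0 hr hα x y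
  field_simp
  linarith [h]

include hρm hρ0 hpm hp0 hr hα hZpos hμ hP hν in
lemma lsym (F : G × G → ℝ≥0∞) (hF : Measurable F) :
    ∫⁻ q, ENNReal.ofReal (α q.1 q.2) * F q ∂ν =
      ∫⁻ q, ENNReal.ofReal (α q.1 q.2) * F q.swap ∂ν := by
  have hαm : Measurable (fun q : G × G => α q.1 q.2) := alpha_meas ρ p r α hpm hρm hr hα
  rw [lint_nu μ₀ ρ Z μ P p ν _ (meas_mulp hαm.ennreal_ofReal hF) hρm hpm hμ hP hν,
    lint_nu μ₀ ρ Z μ P p ν (fun q => ENNReal.ofReal (α q.1 q.2) * F q.swap)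
      (meas_mulp hαm.ennreal_ofReal (hF.comp measurable_swap)) hρm hpm hμ hP hν]
  have hswap : ∫⁻ x, ∫⁻ y,
        ENNReal.ofReal (ρ x / Z) * (ENNReal.ofReal (p x y) *
          (ENNReal.ofReal (α x y) * F (x, y))) ∂μ₀ ∂μ₀ =
      ∫⁻ y, ∫⁻ x, ENNReal.ofReal (ρ x / Z) * (ENNReal.ofReal (p x y) *
          (ENNReal.ofReal (α x y) * F (x, y))) ∂μ₀ ∂μ₀ := by
    refine lintegral_lintegral_swap ?_
    refine Measurable.aemeasurable ?_
    have h1 : Measurable fun q : G × G => ENNReal.ofReal (ρ q.1 / Z) :=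
      ((hρm.div_const Z).comp measurable_fst).ennreal_ofReal
    exact h1.mul ((hpm.ennreal_ofReal).mul ((hαm.ennreal_ofReal).mul hF))
  rw [hswap]
  refine lintegral_congr fun a => lintegral_congr fun b => ?_
  simp only [← mul_assoc, Prod.swap]
  have hc := coeff_db ρ Z p r α hρ0 hp0 hr hα hZpos b a
  simp only [← mul_assoc] at hc
  rw [hc]

include hρm hρ0 hρint hZ hZpos hμ in
lemma mu_prob : IsProbabilityMeasure μ := by
  constructor
  rw [hμ, withDensity_apply _ MeasurableSet.univ, setLIntegral_univ,
    ← ofReal_integral_eq_lintegral_ofReal (hρint.div_const Z)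
      (ae_of_all _ fun x => div_nonneg (hρ0 x) hZpos.le),
    integral_div, ← hZ, div_self hZpos.ne', ENNReal.ofReal_one]

include hν in
lemma lint_fst (g : G → ℝ≥0∞) (hg : Measurable g) :
    ∫⁻ q, g q.1 ∂ν = ∫⁻ x, g x ∂μ := by
  subst hν
  have := Measure.lintegral_compProd (μ := μ) (κ := P)
    (f := fun q : G × G => g q.1) (hg.comp measurable_fst)
  rw [this]
  simp

include hρm hρ0 hpm hp0 hμ hP hν in
lemma nu_pos_ae : ∀ᵐ q ∂ν, 0 < ρ q.1 * p q.1 q.2 := by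
  have hSm : MeasurableSet {q : G × G | ¬ 0 < ρ q.1 * p q.1 q.2} := by
    have : Measurable (fun q : G × G => ρ q.1 * p q.1 q.2) :=
      (hρm.comp measurable_fst).mul hpm
    exact (measurableSet_lt measurable_const this).compl
  rw [ae_iff]
  have : ν {q : G × G | ¬ 0 < ρ q.1 * p q.1 q.2} =
      ∫⁻ q, ({q : G × G | ¬ 0 < ρ q.1 * p q.1 q.2}).indicator 1 q ∂ν :=
    (lintegral_indicator_one hSm).symm
  rw [this, lint_nu μ₀ ρ Z μ P p ν _ ((measurable_one).indicator hSm) hρm hpm hμ hP hν]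
  have hzero : ∀ x y : G, ENNReal.ofReal (ρ x / Z) * (ENNReal.ofReal (p x y) *
      ({q : G × G | ¬ 0 < ρ q.1 * p q.1 q.2}).indicator 1 (x, y)) = 0 := by
    intro x y
    by_cases hxy : (x, y) ∈ {q : G × G | ¬ 0 < ρ q.1 * p q.1 q.2}
    · have h0 : ρ x * p x y = 0 := by
        have := hxy
        simp only [Set.mem_setOf_eq, not_lt] at this
        exact le_antisymm this (mul_nonneg (hρ0 x) (hp0 x y))
      rcases mul_eq_zero.mp h0 with h | h
      · rw [h]; simp
      · rw [h]; simp
    · rw [Set.indicator_of_notMem hxy]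
      simp
  simp only [hzero]
  simp

include hρm hρ0 hpm hp0 hr hα hZpos hμ hP hν in
lemma alpha_null (N : Set G) (hN : μ N = 0) :
    ∀ᵐ q ∂ν, q.2 ∈ N → α q.1 q.2 = 0 := by
  have hαm : Measurable (fun q : G × G => α q.1 q.2) := alpha_meas ρ p r α hpm hρm hr hα
  set N' := toMeasurable μ N with hN'def
  have hN'm : MeasurableSet N' := measurableSet_toMeasurable _ _
  have hN'0 : μ N' = 0 := by rw [hN'def, measure_toMeasurable]; exact hN
  -- μ₀-a.e. z ∈ N' → ρ z = 0
  have hae : ∀ᵐ z ∂μ₀, z ∈ N' → ρ z = 0 := by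
    rw [hμ, withDensity_apply _ hN'm] at hN'0
    have h1 : ∀ᵐ z ∂μ₀.restrict N', ENNReal.ofReal (ρ z / Z) = 0 :=
      (lintegral_eq_zero_iff (hρm.div_const Z).ennreal_ofReal).mp hN'0
    have h2 := (ae_restrict_iff' hN'm).mp h1
    filter_upwards [h2] with z hz hzN
    have := hz hzN
    rw [ENNReal.ofReal_eq_zero] at this
    have hle : ρ z ≤ 0 := by
      by_contra hgt
      push_neg at hgt
      have : 0 < ρ z / Z := div_pos hgt hZpos
      linarith
    linarith [hρ0 z]
  have hBnull : μ₀ (N' ∩ {z | ρ z ≠ 0}) = 0 := by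
    have h0 := ae_iff.mp hae
    convert h0 using 2
    ext z
    simp [Set.mem_inter_iff, Classical.not_imp]
  set S := {q : G × G | ¬ 0 < ρ q.1 * p q.1 q.2} with hSdef
  set B := N' ∩ {z | ρ z ≠ 0} with hBdef
  have hBm : MeasurableSet B := hN'm.inter (hρm (measurableSet_singleton 0)).compl
  have hT2 : ν {q : G × G | q.2 ∈ B} = 0 := by
    have hT2m : MeasurableSet {q : G × G | q.2 ∈ B} := measurable_snd hBm
    rw [← lintegral_indicator_one hT2m,
      lint_nu μ₀ ρ Z μ P p ν _ (measurable_one.indicator hT2m) hρm hpm hμ hP hν]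
    have hain : ∀ᵐ y ∂μ₀, y ∉ B := by
      rw [ae_iff]
      simpa [Set.setOf_mem_eq] using hBnull
    have hin : ∀ x : G, ∫⁻ y, ENNReal.ofReal (ρ x / Z) * (ENNReal.ofReal (p x y) *
        ({q : G × G | q.2 ∈ B}).indicator 1 (x, y)) ∂μ₀ = 0 := by
      intro x
      have hz : (fun y => ENNReal.ofReal (ρ x / Z) * (ENNReal.ofReal (p x y) *
          ({q : G × G | q.2 ∈ B}).indicator 1 (x, y))) =ᵐ[μ₀] 0 := by
        filter_upwards [hain] with y hy
        rw [Set.indicator_of_notMem (by simpa using hy)]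
        simp
      rw [lintegral_congr_ae hz]
      simp
    simp only [hin]
    simp
  have hSnull : ν S = 0 := by
    have h := nu_pos_ae μ₀ ρ Z μ P p ν hρm hρ0 hμ hpm hp0 hP hν
    rw [ae_iff] at h
    exact h
  rw [ae_iff]
  refine measure_mono_null ?_ (measure_union_null hSnull hT2)
  intro q hq
  simp only [Set.mem_setOf_eq, Classical.not_imp] at hq
  by_cases hS : q ∈ S
  · exact Or.inl hS
  · right
    rw [hSdef, Set.mem_setOf_eq, not_not] at hS
    show q.2 ∈ B
    refine ⟨subset_toMeasurable μ N hq.1, fun hρ2 : ρ q.2 = 0 => ?_⟩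
    apply hq.2
    rw [hα, hr, if_pos hS, hρ2, zero_mul, zero_div]
    simp

include hρm hρ0 hZpos hμ hpm hp0 hP hr hα hν in
lemma bsym (F : G × G → ℝ) (hF : Measurable F)
    (hint : Integrable (fun q : G × G => α q.1 q.2 * F q) ν) :
    Integrable (fun q : G × G => α q.1 q.2 * F q.swap) ν ∧
    ∫ q, α q.1 q.2 * F q ∂ν = ∫ q, α q.1 q.2 * F q.swap ∂ν := by
  have hαm : Measurable (fun q : G × G => α q.1 q.2) := alpha_meas ρ p r α hpm hρm hr hα
  have hα0 : ∀ x y, 0 ≤ α x y := alpha_nonneg ρ p r α hρ0 hp0 hr hα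
  have hkey : ∀ (v : ℝ) (x y : G), (‖α x y * v‖₊ : ℝ≥0∞) =
      ENNReal.ofReal (α x y) * ENNReal.ofReal ‖v‖ := by
    intro v x y
    rw [← ENNReal.ofReal_mul (hα0 x y), ← ofReal_norm_eq_coe_nnnorm, norm_mul,
      Real.norm_of_nonneg (hα0 x y)]
  have hInorm : ∫⁻ q, (‖α q.1 q.2 * F q.swap‖₊ : ℝ≥0∞) ∂ν =
      ∫⁻ q, (‖α q.1 q.2 * F q‖₊ : ℝ≥0∞) ∂ν := by
    simp only [hkey]
    exact (lsym μ₀ ρ Z μ P p r α ν hρm hρ0 hZpos hμ hpm hp0 hP hr hα hν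
      (fun q => ENNReal.ofReal ‖F q‖) hF.norm.ennreal_ofReal).symm
  have hswapint : Integrable (fun q : G × G => α q.1 q.2 * F q.swap) ν := by
    refine ⟨(hαm.mul (hF.comp measurable_swap)).aestronglyMeasurable, ?_⟩
    exact lt_of_le_of_lt hInorm.le hint.2
  refine ⟨hswapint, ?_⟩
  rw [integral_eq_lintegral_pos_part_sub_lintegral_neg_part hint,
    integral_eq_lintegral_pos_part_sub_lintegral_neg_part hswapint]
  have hpos : ∫⁻ q, ENNReal.ofReal (α q.1 q.2 * F q) ∂ν =
      ∫⁻ q, ENNReal.ofReal (α q.1 q.2 * F q.swap) ∂ν := by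
    have e1 : ∀ (x y : G) (v : ℝ), ENNReal.ofReal (α x y * v) =
        ENNReal.ofReal (α x y) * ENNReal.ofReal v := fun x y v =>
      ENNReal.ofReal_mul (hα0 x y)
    simp only [e1]
    exact lsym μ₀ ρ Z μ P p r α ν hρm hρ0 hZpos hμ hpm hp0 hP hr hα hν
      (fun q => ENNReal.ofReal (F q)) hF.ennreal_ofReal
  have hneg : ∫⁻ q, ENNReal.ofReal (-(α q.1 q.2 * F q)) ∂ν =
      ∫⁻ q, ENNReal.ofReal (-(α q.1 q.2 * F q.swap)) ∂ν := by
    have e1 : ∀ (x y : G) (v : ℝ), ENNReal.ofReal (-(α x y * v)) =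
        ENNReal.ofReal (α x y) * ENNReal.ofReal (-v) := by
      intro x y v
      rw [← ENNReal.ofReal_mul (hα0 x y), mul_neg]
    simp only [e1]
    exact lsym μ₀ ρ Z μ P p r α ν hρm hρ0 hZpos hμ hpm hp0 hP hr hα hν
      (fun q => ENNReal.ofReal (-F q)) hF.neg.ennreal_ofReal
  rw [hpos, hneg]

include hν in
lemma bint_fst (g : G → ℝ) (hg : AEStronglyMeasurable g μ) :
    ∫ q, g q.1 ∂ν = ∫ x, g x ∂μ := by
  subst hν
  have hfst : (μ.compProd P).map Prod.fst = μ := Measure.fst_compProd μ P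
  conv_rhs => rw [← hfst]
  rw [integral_map measurable_fst.aemeasurable (by rw [hfst]; exact hg)]

include hν in
lemma fst_null (N : Set G) (hN : μ N = 0) : ∀ᵐ q ∂ν, q.1 ∉ N := by
  subst hν
  set N' := toMeasurable μ N with hN'def
  have hN'm : MeasurableSet N' := measurableSet_toMeasurable _ _
  have hN'0 : μ N' = 0 := by rw [hN'def, measure_toMeasurable]; exact hN
  rw [ae_iff]
  refine measure_mono_null (fun q hq => ?_)
    (?_ : (μ.compProd P) {q : G × G | q.1 ∈ N'} = 0)
  · simp only [Set.mem_setOf_eq, not_not] at hq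
    exact subset_toMeasurable μ N hq
  · have h1 : (μ.compProd P) {q : G × G | q.1 ∈ N'} =
        ∫⁻ q : G × G, N'.indicator 1 q.1 ∂(μ.compProd P) := by
      rw [← lintegral_indicator_one
        (show MeasurableSet {q : G × G | q.1 ∈ N'} from measurable_fst hN'm)]
      refine lintegral_congr fun q => ?_
      by_cases hq : q.1 ∈ N' <;> simp [Set.indicator_apply, hq]
    have hm2 : Measurable fun q : G × G => N'.indicator (1 : G → ℝ≥0∞) q.1 :=
      (measurable_one.indicator hN'm).comp measurable_fst
    rw [h1, Measure.lintegral_compProd hm2]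
    simp only [lintegral_const, measure_univ, mul_one]
    rw [lintegral_indicator_one hN'm, hN'0]

variable (K : Kernel G G) [IsMarkovKernel K]
  (Kaug : Kernel (G × G) (G × G)) [IsMarkovKernel Kaug]
variable (hK : ∀ x, K x = (P x).withDensity (fun y => ENNReal.ofReal (α x y)) +
      ENNReal.ofReal (∫ y, (1 - α x y) ∂(P x)) • Measure.dirac x)
  (hKaug : ∀ x y, Kaug (x, y) =
      ENNReal.ofReal (α x y) • ((Measure.dirac y).prod (P y)) +
      ENNReal.ofReal (1 - α x y) • ((Measure.dirac x).prod (P x)))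

include hρm hρ0 hpm hp0 hr hα hK in
lemma lK (x : G) (F : G → ℝ≥0∞) (hF : Measurable F) :
    ∫⁻ z, F z ∂K x =
      ∫⁻ y, (ENNReal.ofReal (α x y) * F y + ENNReal.ofReal (1 - α x y) * F x) ∂P x := by
  have hαm : Measurable (fun q : G × G => α q.1 q.2) := alpha_meas ρ p r α hpm hρm hr hα
  have hαx : Measurable fun y => α x y := hαm.comp measurable_prodMk_left
  have hα0 : ∀ a b, 0 ≤ α a b := alpha_nonneg ρ p r α hρ0 hp0 hr hα
  have hα1 : ∀ a b, α a b ≤ 1 := alpha_le_one ρ p r α hρ0 hp0 hr hα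
  have h1m : Integrable (fun y => 1 - α x y) (P x) := by
    have hb : ∀ᵐ y ∂P x, ‖1 - α x y‖ ≤ 1 := ae_of_all _ fun y => by
      rw [Real.norm_eq_abs, abs_le]
      constructor
      · linarith [hα1 x y]
      · linarith [hα0 x y]
    exact (integrable_const 1).mono' (measurable_const.sub hαx).aestronglyMeasurable hb
  have hof : ENNReal.ofReal (∫ y, (1 - α x y) ∂P x) = ∫⁻ y, ENNReal.ofReal (1 - α x y) ∂P x :=
    ofReal_integral_eq_lintegral_ofReal h1m (ae_of_all _ fun y => by
      show (0:ℝ) ≤ 1 - α x y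
      linarith [hα1 x y])
  rw [hK x, lintegral_add_measure,
    lintegral_withDensity_eq_lintegral_mul _ hαx.ennreal_ofReal hF,
    lintegral_smul_measure, lintegral_dirac' _ hF, hof]
  simp only [Pi.mul_apply, smul_eq_mul]
  rw [← lintegral_mul_const (f := fun y => ENNReal.ofReal (1 - α x y)) _
      (measurable_const.sub hαx).ennreal_ofReal,
    ← lintegral_add_left (f := fun y => ENNReal.ofReal (α x y) * F y)
      (hαx.ennreal_ofReal.mul hF)]

include hρm hρ0 hZpos hμ hpm hp0 hP hr hα hK in
lemma bindK : μ.bind K = μ := by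
  have hαm : Measurable (fun q : G × G => α q.1 q.2) := alpha_meas ρ p r α hpm hρm hr hα
  have hα0 : ∀ a b, 0 ≤ α a b := alpha_nonneg ρ p r α hρ0 hp0 hr hα
  have hα1 : ∀ a b, α a b ≤ 1 := alpha_le_one ρ p r α hρ0 hp0 hr hα
  ext s hs
  rw [Measure.bind_apply hs (Kernel.measurable K).aemeasurable]
  have h1 : ∀ x, K x s = ∫⁻ y, (ENNReal.ofReal (α x y) * s.indicator 1 y +
      ENNReal.ofReal (1 - α x y) * s.indicator 1 x) ∂P x := by
    intro x
    rw [← lintegral_indicator_one hs]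
    exact lK (ρ := ρ) (P := P) (p := p) (r := r) (α := α) (K := K) (hρm := hρm)
      (hρ0 := hρ0) (hpm := hpm) (hp0 := hp0) (hr := hr) (hα := hα) (hK := hK) x _
      (measurable_one.indicator hs)
  simp only [h1]
  have hFm : Measurable fun q : G × G => ENNReal.ofReal (α q.1 q.2) * s.indicator 1 q.2 +
      ENNReal.ofReal (1 - α q.1 q.2) * s.indicator 1 q.1 := by
    have him : Measurable (s.indicator (1 : G → ℝ≥0∞)) := measurable_one.indicator hs
    exact (meas_mulp hαm.ennreal_ofReal (him.comp measurable_snd)).add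
      ((measurable_const.sub hαm).ennreal_ofReal.mul (him.comp measurable_fst))
  have hcp : ∫⁻ x, ∫⁻ y, (ENNReal.ofReal (α x y) * s.indicator 1 y +
      ENNReal.ofReal (1 - α x y) * s.indicator 1 x) ∂P x ∂μ =
      ∫⁻ q : G × G, (ENNReal.ofReal (α q.1 q.2) * s.indicator 1 q.2 +
      ENNReal.ofReal (1 - α q.1 q.2) * s.indicator 1 q.1) ∂(μ.compProd P) :=
    (Measure.lintegral_compProd hFm).symm
  rw [hcp]
  have him : Measurable (s.indicator (1 : G → ℝ≥0∞)) := measurable_one.indicator hs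
  have him2 : Measurable fun q : G × G => s.indicator (1 : G → ℝ≥0∞) q.2 :=
    him.comp measurable_snd
  have him1 : Measurable fun q : G × G => s.indicator (1 : G → ℝ≥0∞) q.1 :=
    him.comp measurable_fst
  rw [lintegral_add_left (meas_mulp hαm.ennreal_ofReal him2),
    lsym μ₀ ρ Z μ P p r α (μ.compProd P) hρm hρ0 hZpos hμ hpm hp0 hP hr hα rfl
      (fun q => s.indicator 1 q.2) him2]
  simp only [Prod.snd_swap]
  rw [← lintegral_add_left (f := fun q : G × G => ENNReal.ofReal (α q.1 q.2) *
      s.indicator 1 q.1) (meas_mulp hαm.ennreal_ofReal him1)]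
  have hcomb : ∀ q : G × G, ENNReal.ofReal (α q.1 q.2) * s.indicator 1 q.1 +
      ENNReal.ofReal (1 - α q.1 q.2) * s.indicator 1 q.1 = s.indicator 1 q.1 := by
    intro q
    rw [← add_mul, ← ENNReal.ofReal_add (hα0 q.1 q.2) (by linarith [hα1 q.1 q.2])]
    norm_num
  calc ∫⁻ q : G × G, (ENNReal.ofReal (α q.1 q.2) * s.indicator 1 q.1 +
        ENNReal.ofReal (1 - α q.1 q.2) * s.indicator 1 q.1) ∂(μ.compProd P)
      = ∫⁻ q : G × G, s.indicator 1 q.1 ∂(μ.compProd P) := lintegral_congr hcomb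
    _ = ∫⁻ x, s.indicator 1 x ∂μ := lint_fst μ P (μ.compProd P) rfl _ him
    _ = μ s := lintegral_indicator_one hs

include hKaug in
lemma lKaug (x y : G) (F : G × G → ℝ≥0∞) (hF : Measurable F) :
    ∫⁻ u, F u ∂Kaug (x, y) = ENNReal.ofReal (α x y) * ∫⁻ w, F (y, w) ∂P y
      + ENNReal.ofReal (1 - α x y) * ∫⁻ w, F (x, w) ∂P x := by
  rw [hKaug x y, lintegral_add_measure, lintegral_smul_measure, lintegral_smul_measure,
    Measure.dirac_prod, Measure.dirac_prod, lintegral_map hF measurable_prodMk_left,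
    lintegral_map hF measurable_prodMk_left, smul_eq_mul, smul_eq_mul]

include hρm hρ0 hZpos hμ hpm hp0 hP hr hα hν hKaug in
lemma bindKaug : ν.bind Kaug = ν := by
  have hαm : Measurable (fun q : G × G => α q.1 q.2) := alpha_meas ρ p r α hpm hρm hr hα
  have hα0 : ∀ a b, 0 ≤ α a b := alpha_nonneg ρ p r α hρ0 hp0 hr hα
  have hα1 : ∀ a b, α a b ≤ 1 := alpha_le_one ρ p r α hρ0 hp0 hr hα
  ext s hs
  rw [Measure.bind_apply hs (Kernel.measurable Kaug).aemeasurable]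
  have hΦm : Measurable fun z => P z (Prod.mk z ⁻¹' s) := Kernel.measurable_kernel_prodMk_left hs
  have h1 : ∀ q : G × G, Kaug q s = ENNReal.ofReal (α q.1 q.2) * P q.2 (Prod.mk q.2 ⁻¹' s) +
      ENNReal.ofReal (1 - α q.1 q.2) * P q.1 (Prod.mk q.1 ⁻¹' s) := by
    intro q
    have hq : Kaug q = Kaug (q.1, q.2) := by rw [Prod.mk.eta]
    rw [hq, ← lintegral_indicator_one hs,
      lKaug P α Kaug hKaug q.1 q.2 _ (measurable_one.indicator hs)]
    have hind : ∀ z : G, ∫⁻ w, s.indicator 1 (z, w) ∂P z = P z (Prod.mk z ⁻¹' s) := by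
      intro z
      rw [← lintegral_indicator_one (measurable_prodMk_left hs)]
      refine lintegral_congr fun w => ?_
      by_cases hw : (z, w) ∈ s <;> simp [Set.indicator_apply, hw, Set.mem_preimage]
    rw [hind, hind]
  simp only [h1]
  have hΦ2 : Measurable fun q : G × G => P q.2 (Prod.mk q.2 ⁻¹' s) :=
    hΦm.comp measurable_snd
  have hΦ1 : Measurable fun q : G × G => P q.1 (Prod.mk q.1 ⁻¹' s) :=
    hΦm.comp measurable_fst
  rw [lintegral_add_left (meas_mulp hαm.ennreal_ofReal hΦ2),
    lsym μ₀ ρ Z μ P p r α ν hρm hρ0 hZpos hμ hpm hp0 hP hr hα hν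
      (fun q => P q.2 (Prod.mk q.2 ⁻¹' s)) hΦ2]
  simp only [Prod.snd_swap]
  rw [← lintegral_add_left (f := fun q : G × G => ENNReal.ofReal (α q.1 q.2) *
      P q.1 (Prod.mk q.1 ⁻¹' s)) (meas_mulp hαm.ennreal_ofReal hΦ1)]
  have hcomb : ∀ q : G × G, ENNReal.ofReal (α q.1 q.2) * P q.1 (Prod.mk q.1 ⁻¹' s) +
      ENNReal.ofReal (1 - α q.1 q.2) * P q.1 (Prod.mk q.1 ⁻¹' s) =
      P q.1 (Prod.mk q.1 ⁻¹' s) := by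
    intro q
    rw [← add_mul, ← ENNReal.ofReal_add (hα0 q.1 q.2) (by linarith [hα1 q.1 q.2])]
    norm_num
  calc ∫⁻ q : G × G, (ENNReal.ofReal (α q.1 q.2) * P q.1 (Prod.mk q.1 ⁻¹' s) +
        ENNReal.ofReal (1 - α q.1 q.2) * P q.1 (Prod.mk q.1 ⁻¹' s)) ∂ν
      = ∫⁻ q : G × G, P q.1 (Prod.mk q.1 ⁻¹' s) ∂ν := lintegral_congr hcomb
    _ = ∫⁻ x, P x (Prod.mk x ⁻¹' s) ∂μ := lint_fst μ P ν hν _ hΦm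
    _ = ν s := by rw [hν, Measure.compProd_apply hs]

include hν in
lemma qop_congr {g₁ g₂ : G × G → ℝ} (h : g₁ =ᵐ[ν] g₂) : qop P g₁ =ᵐ[μ] qop P g₂ := by
  subst hν
  filter_upwards [Measure.ae_ae_of_ae_compProd h] with x hx using integral_congr_ae hx

include hν in
lemma qop_facts (hprob : IsProbabilityMeasure ν) {g : G × G → ℝ} (hg : MemLp g 2 ν) :
    MemLp (qop P g) 2 μ ∧ eLpNorm (qop P g) 2 μ ≤ eLpNorm g 2 ν ∧
      ∫ x, qop P g x ∂μ = ∫ q, g q ∂ν := by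
  obtain ⟨g', hg'sm, hgg'⟩ : ∃ g', StronglyMeasurable g' ∧ g =ᵐ[ν] g' :=
    ⟨hg.1.mk g, hg.1.stronglyMeasurable_mk, hg.1.ae_eq_mk⟩
  have hqq : qop P g =ᵐ[μ] qop P g' := qop_congr μ P ν hν hgg'
  have hsm : StronglyMeasurable (qop P g') := hg'sm.integral_kernel_prod_right'
  have hl2 : ∫⁻ x, (‖qop P g' x‖₊ : ℝ≥0∞) ^ 2 ∂μ ≤ ∫⁻ q, (‖g' q‖₊ : ℝ≥0∞) ^ 2 ∂ν := by
    have hpt : ∀ x, (‖qop P g' x‖₊ : ℝ≥0∞) ^ 2 ≤ ∫⁻ y, (‖g' (x, y)‖₊ : ℝ≥0∞) ^ 2 ∂P x :=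
      fun x => sq_int_le (P x) _
    calc ∫⁻ x, (‖qop P g' x‖₊ : ℝ≥0∞) ^ 2 ∂μ
        ≤ ∫⁻ x, ∫⁻ y, (‖g' (x, y)‖₊ : ℝ≥0∞) ^ 2 ∂P x ∂μ := lintegral_mono hpt
      _ = ∫⁻ q, (‖g' q‖₊ : ℝ≥0∞) ^ 2 ∂ν := by
          rw [hν, Measure.lintegral_compProd (hg'sm.measurable.nnnorm.coe_nnreal_ennreal.pow_const 2)]
  have hnorm : eLpNorm (qop P g) 2 μ ≤ eLpNorm g 2 ν := by
    rw [eLpNorm_congr_ae hqq, eLpNorm_congr_ae hgg']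
    exact l2norm_mono hl2
  have hmem : MemLp (qop P g) 2 μ :=
    ⟨hsm.aestronglyMeasurable.congr hqq.symm, lt_of_le_of_lt hnorm hg.2⟩
  refine ⟨hmem, hnorm, ?_⟩
  have hgint : Integrable g ν := hg.integrable one_le_two
  have hg'int : Integrable g' ν := hgint.congr hgg'
  have h2 : ∫ x, qop P g' x ∂μ = ∫ q, g' q ∂ν := by
    rw [hν] at hg'int ⊢
    exact (MeasureTheory.Measure.integral_compProd hg'int).symm
  rw [integral_congr_ae hqq, h2]
  exact integral_congr_ae hgg'.symm

include hρm hρ0 hZpos hμ hpm hp0 hP hr hα hν in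
lemma top_congr {u u' : G → ℝ} (h : u =ᵐ[μ] u') : top α u =ᵐ[ν] top α u' := by
  set N := {z | ¬ u z = u' z} with hNdef
  have hN : μ N = 0 := ae_iff.mp h
  have h1 := fst_null μ P ν hν N hN
  have h2 := alpha_null μ₀ ρ Z μ P p r α ν hρm hρ0 hZpos hμ hpm hp0 hP hr hα hν N hN
  filter_upwards [h1, h2] with q hq1 hq2
  have hu1 : u q.1 = u' q.1 := not_not.mp (by simpa [hNdef] using hq1)
  by_cases hy : q.2 ∈ N
  · have hz : α q.1 q.2 = 0 := hq2 hy
    simp [top, hz, hu1]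
  · have hu2 : u q.2 = u' q.2 := not_not.mp (by simpa [hNdef] using hy)
    simp [top, hu1, hu2]

include hρm hρ0 hZpos hμ hpm hp0 hP hr hα hν in
lemma top_facts (hprob : IsProbabilityMeasure ν) {f : G → ℝ} (hf : MemLp f 2 μ) :
    MemLp (top α f) 2 ν ∧ eLpNorm (top α f) 2 ν ≤ eLpNorm f 2 μ ∧
      ∫ q, top α f q ∂ν = ∫ x, f x ∂μ := by
  have hμprob : IsProbabilityMeasure μ := by
    constructor
    have h := hprob.measure_univ
    rw [hν, Measure.compProd_apply_univ] at h
    exact h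
  have hαm : Measurable (fun q : G × G => α q.1 q.2) := alpha_meas ρ p r α hpm hρm hr hα
  have hα0 : ∀ a b, 0 ≤ α a b := alpha_nonneg ρ p r α hρ0 hp0 hr hα
  have hα1 : ∀ a b, α a b ≤ 1 := alpha_le_one ρ p r α hρ0 hp0 hr hα
  obtain ⟨f', hf'sm, hff'⟩ : ∃ f', StronglyMeasurable f' ∧ f =ᵐ[μ] f' :=
    ⟨hf.1.mk f, hf.1.stronglyMeasurable_mk, hf.1.ae_eq_mk⟩
  have hf'meas : Measurable f' := hf'sm.measurable
  have htt : top α f =ᵐ[ν] top α f' :=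
    top_congr μ₀ ρ Z μ P p r α ν hρm hρ0 hZpos hμ hpm hp0 hP hr hα hν hff'
  have htm : Measurable (top α f') := by
    refine Measurable.add ?_ ?_
    · exact hαm.mul (hf'meas.comp measurable_snd)
    · exact (measurable_const.sub hαm).mul (hf'meas.comp measurable_fst)
  -- L² contraction
  have hl2 : ∫⁻ q, (‖top α f' q‖₊ : ℝ≥0∞) ^ 2 ∂ν ≤ ∫⁻ x, (‖f' x‖₊ : ℝ≥0∞) ^ 2 ∂μ := by
    have hpt : ∀ q : G × G, (‖top α f' q‖₊ : ℝ≥0∞) ^ 2 ≤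
        ENNReal.ofReal (α q.1 q.2) * (‖f' q.2‖₊ : ℝ≥0∞) ^ 2 +
        ENNReal.ofReal (1 - α q.1 q.2) * (‖f' q.1‖₊ : ℝ≥0∞) ^ 2 := fun q =>
      convex_sq (α q.1 q.2) (f' q.2) (f' q.1) (hα0 q.1 q.2) (hα1 q.1 q.2)
    have hm2 : Measurable fun q : G × G => (‖f' q.2‖₊ : ℝ≥0∞) ^ 2 :=
      ((hf'sm.measurable.nnnorm.coe_nnreal_ennreal.pow_const 2).comp measurable_snd)
    have hm1 : Measurable fun q : G × G => (‖f' q.1‖₊ : ℝ≥0∞) ^ 2 :=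
      ((hf'sm.measurable.nnnorm.coe_nnreal_ennreal.pow_const 2).comp measurable_fst)
    calc ∫⁻ q, (‖top α f' q‖₊ : ℝ≥0∞) ^ 2 ∂ν
        ≤ ∫⁻ q : G × G, (ENNReal.ofReal (α q.1 q.2) * (‖f' q.2‖₊ : ℝ≥0∞) ^ 2 +
          ENNReal.ofReal (1 - α q.1 q.2) * (‖f' q.1‖₊ : ℝ≥0∞) ^ 2) ∂ν := lintegral_mono hpt
      _ = ∫⁻ q : G × G, ENNReal.ofReal (α q.1 q.2) * (‖f' q.2‖₊ : ℝ≥0∞) ^ 2 ∂ν +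
          ∫⁻ q : G × G, ENNReal.ofReal (1 - α q.1 q.2) * (‖f' q.1‖₊ : ℝ≥0∞) ^ 2 ∂ν :=
          lintegral_add_left (meas_mulp hαm.ennreal_ofReal hm2) _
      _ = ∫⁻ q : G × G, ENNReal.ofReal (α q.1 q.2) * (‖f' q.1‖₊ : ℝ≥0∞) ^ 2 ∂ν +
          ∫⁻ q : G × G, ENNReal.ofReal (1 - α q.1 q.2) * (‖f' q.1‖₊ : ℝ≥0∞) ^ 2 ∂ν := by
          rw [lsym μ₀ ρ Z μ P p r α ν hρm hρ0 hZpos hμ hpm hp0 hP hr hα hν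
            (fun q => (‖f' q.2‖₊ : ℝ≥0∞) ^ 2) hm2]
          simp only [Prod.snd_swap]
      _ = ∫⁻ q : G × G, (‖f' q.1‖₊ : ℝ≥0∞) ^ 2 ∂ν := by
          rw [← lintegral_add_left (meas_mulp hαm.ennreal_ofReal hm1)]
          refine lintegral_congr fun q => ?_
          rw [← add_mul, ← ENNReal.ofReal_add (hα0 q.1 q.2) (by linarith [hα1 q.1 q.2])]
          norm_num
      _ = ∫⁻ x, (‖f' x‖₊ : ℝ≥0∞) ^ 2 ∂μ :=
          lint_fst μ P ν hν _ (hf'sm.measurable.nnnorm.coe_nnreal_ennreal.pow_const 2)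
  have hnorm : eLpNorm (top α f) 2 ν ≤ eLpNorm f 2 μ := by
    rw [eLpNorm_congr_ae htt, eLpNorm_congr_ae hff']
    exact l2norm_mono hl2
  have hfl2' : MemLp f' 2 μ := hf.ae_eq hff'
  have hmem : MemLp (top α f) 2 ν :=
    ⟨htm.aestronglyMeasurable.congr htt.symm, lt_of_le_of_lt hnorm hf.2⟩
  refine ⟨hmem, hnorm, ?_⟩
  -- mean preservation
  have hfint : Integrable f μ := hf.integrable one_le_two
  have hf'int : Integrable f' μ := hfint.congr hff'
  have hfstint : Integrable (fun q : G × G => f' q.1) ν := by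
    have hfst : ν.map Prod.fst = μ := by rw [hν]; exact Measure.fst_compProd μ P
    refine (integrable_map_measure ?_ measurable_fst.aemeasurable).mp ?_
    · rw [hfst]; exact hf'sm.aestronglyMeasurable
    · rw [hfst]; exact hf'int
  have hBint : Integrable (fun q : G × G => (1 - α q.1 q.2) * f' q.1) ν := by
    refine hfstint.abs.mono' ((measurable_const.sub hαm).mul
      (hf'meas.comp measurable_fst)).aestronglyMeasurable (ae_of_all _ fun q => ?_)
    rw [Real.norm_eq_abs, abs_mul]
    have h1 : |1 - α q.1 q.2| ≤ 1 := by
      rw [abs_le]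
      constructor
      · linarith [hα1 q.1 q.2]
      · linarith [hα0 q.1 q.2]
    calc |1 - α q.1 q.2| * |f' q.1| ≤ 1 * |f' q.1| :=
          mul_le_mul_of_nonneg_right h1 (abs_nonneg _)
      _ = |f' q.1| := one_mul _
  have hA'int : Integrable (fun q : G × G => α q.1 q.2 * f' q.1) ν := by
    refine hfstint.abs.mono' (hαm.mul (hf'meas.comp measurable_fst)).aestronglyMeasurable
      (ae_of_all _ fun q => ?_)
    rw [Real.norm_eq_abs, abs_mul]
    have h1 : |α q.1 q.2| ≤ 1 := by
      rw [abs_le]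
      constructor
      · linarith [hα0 q.1 q.2]
      · exact hα1 q.1 q.2
    calc |α q.1 q.2| * |f' q.1| ≤ 1 * |f' q.1| :=
          mul_le_mul_of_nonneg_right h1 (abs_nonneg _)
      _ = |f' q.1| := one_mul _
  obtain ⟨hAint, hAeq⟩ := bsym μ₀ ρ Z μ P p r α ν hρm hρ0 hZpos hμ hpm hp0 hP hr hα hν
    (fun q => f' q.1) (hf'meas.comp measurable_fst) hA'int
  simp only [Prod.fst_swap] at hAint hAeq
  have hsum : ∫ q, top α f q ∂ν = ∫ q, top α f' q ∂ν := integral_congr_ae htt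
  rw [hsum]
  have h3 : ∫ q, top α f' q ∂ν = ∫ q : G × G, α q.1 q.2 * f' q.2 ∂ν +
      ∫ q : G × G, (1 - α q.1 q.2) * f' q.1 ∂ν := integral_add hAint hBint
  rw [h3, ← hAeq, ← integral_add hA'int hBint]
  have h4 : ∀ q : G × G, α q.1 q.2 * f' q.1 + (1 - α q.1 q.2) * f' q.1 = f' q.1 := by
    intro q; ring
  rw [show (fun q : G × G => α q.1 q.2 * f' q.1 + (1 - α q.1 q.2) * f' q.1) =
    fun q : G × G => f' q.1 from funext h4]
  rw [bint_fst μ P ν hν f' hf'sm.aestronglyMeasurable]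
  exact integral_congr_ae hff'.symm

include hρm hρ0 hZpos hμ hpm hp0 hP hr hα hν hK in
lemma B1 (hμprob : IsProbabilityMeasure μ) {f : G → ℝ} (hf : MemLp f 2 μ) :
    kop K f =ᵐ[μ] qop P (top α f) := by
  have hbindK := bindK μ₀ ρ Z μ P p r α hρm hρ0 hZpos hμ hpm hp0 hP hr hα K hK
  have hαm : Measurable (fun q : G × G => α q.1 q.2) := alpha_meas ρ p r α hpm hρm hr hα
  have hα0 : ∀ a b, 0 ≤ α a b := alpha_nonneg ρ p r α hρ0 hp0 hr hα
  have hα1 : ∀ a b, α a b ≤ 1 := alpha_le_one ρ p r α hρ0 hp0 hr hα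
  obtain ⟨f', hf'sm, hff'⟩ : ∃ f', StronglyMeasurable f' ∧ f =ᵐ[μ] f' :=
    ⟨hf.1.mk f, hf.1.stronglyMeasurable_mk, hf.1.ae_eq_mk⟩
  have h1 : kop K f =ᵐ[μ] kop K f' := kop_congr_ae K μ hbindK hff'
  have h2 : qop P (top α f) =ᵐ[μ] qop P (top α f') :=
    qop_congr μ P ν hν (top_congr μ₀ ρ Z μ P p r α ν hρm hρ0 hZpos hμ hpm hp0 hP hr hα hν hff')
  suffices hs : kop K f' =ᵐ[μ] qop P (top α f') from h1.trans (hs.trans h2.symm)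
  have hfint : Integrable f' μ := (hf.ae_eq hff').integrable one_le_two
  have hint : ∀ᵐ x ∂μ, Integrable f' (K x) := integrable_ae_bind K μ hbindK hfint
  filter_upwards [hint] with x hx
  have hαx : Measurable fun y => α x y := hαm.comp measurable_prodMk_left
  have hαxNN : Measurable fun y => (α x y).toNNReal := hαx.real_toNNReal
  set m1 := (P x).withDensity fun y => ENNReal.ofReal (α x y) with hm1
  set c := ENNReal.ofReal (∫ y, (1 - α x y) ∂P x) with hc
  have hKx : K x = m1 + c • Measure.dirac x := hK x
  rw [hKx] at hx
  have hint1 : Integrable f' m1 := hx.mono_measure (Measure.le_add_right le_rfl)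
  have hint2 : Integrable f' (c • Measure.dirac x) := hx.mono_measure (Measure.le_add_left le_rfl)
  have hm1' : m1 = (P x).withDensity fun y => ((α x y).toNNReal : ℝ≥0∞) := rfl
  have e1 : ∫ z, f' z ∂m1 = ∫ y, α x y * f' y ∂P x := by
    rw [hm1', integral_withDensity_eq_integral_smul hαxNN f']
    refine integral_congr_ae (ae_of_all _ fun y => ?_)
    simp [NNReal.smul_def, Real.coe_toNNReal _ (hα0 x y)]
  have hintα : Integrable (fun y => α x y * f' y) (P x) := by
    have := (integrable_withDensity_iff_integrable_smul hαxNN).mp (hm1' ▸ hint1)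
    refine this.congr (ae_of_all _ fun y => ?_)
    simp [NNReal.smul_def, Real.coe_toNNReal _ (hα0 x y)]
  have h1mint : Integrable (fun y => 1 - α x y) (P x) := by
    have hb : ∀ᵐ y ∂P x, ‖1 - α x y‖ ≤ 1 := ae_of_all _ fun y => by
      rw [Real.norm_eq_abs, abs_le]
      constructor
      · linarith [hα1 x y]
      · linarith [hα0 x y]
    exact (integrable_const 1).mono' (measurable_const.sub hαx).aestronglyMeasurable hb
  have hnn : 0 ≤ ∫ y, (1 - α x y) ∂P x :=
    integral_nonneg fun y => by
      show (0:ℝ) ≤ 1 - α x y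
      linarith [hα1 x y]
  calc kop K f' x = ∫ z, f' z ∂m1 + ∫ z, f' z ∂(c • Measure.dirac x) := by
        rw [kop, hKx, integral_add_measure hint1 hint2]
    _ = ∫ y, α x y * f' y ∂P x + (∫ y, (1 - α x y) ∂P x) * f' x := by
        rw [e1, integral_smul_measure, integral_dirac' _ x hf'sm, hc,
          ENNReal.toReal_ofReal hnn, smul_eq_mul]
    _ = ∫ y, α x y * f' y ∂P x + ∫ y, (1 - α x y) * f' x ∂P x := by
        rw [← integral_mul_const]
    _ = qop P (top α f') x := by
        rw [qop, ← integral_add hintα (h1mint.mul_const (f' x))]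
        rfl

include hρm hρ0 hZpos hμ hpm hp0 hP hr hα hν hKaug in
lemma B2 (hνprob : IsProbabilityMeasure ν) {g : G × G → ℝ} (hg : MemLp g 2 ν) :
    kop Kaug g =ᵐ[ν] top α (qop P g) := by
  have hbindKaug := bindKaug μ₀ ρ Z μ P p r α ν hρm hρ0 hZpos hμ hpm hp0 hP hr hα hν Kaug hKaug
  have hα0 : ∀ a b, 0 ≤ α a b := alpha_nonneg ρ p r α hρ0 hp0 hr hα
  have hα1 : ∀ a b, α a b ≤ 1 := alpha_le_one ρ p r α hρ0 hp0 hr hα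
  obtain ⟨g', hg'sm, hgg'⟩ : ∃ g', StronglyMeasurable g' ∧ g =ᵐ[ν] g' :=
    ⟨hg.1.mk g, hg.1.stronglyMeasurable_mk, hg.1.ae_eq_mk⟩
  have h1 : kop Kaug g =ᵐ[ν] kop Kaug g' := kop_congr_ae Kaug ν hbindKaug hgg'
  have h2 : top α (qop P g) =ᵐ[ν] top α (qop P g') :=
    top_congr μ₀ ρ Z μ P p r α ν hρm hρ0 hZpos hμ hpm hp0 hP hr hα hν
      (qop_congr μ P ν hν hgg')
  suffices hs : kop Kaug g' =ᵐ[ν] top α (qop P g') from h1.trans (hs.trans h2.symm)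
  have hgint : Integrable g' ν := (hg.ae_eq hgg').integrable one_le_two
  have hint : ∀ᵐ q ∂ν, Integrable g' (Kaug q) := integrable_ae_bind Kaug ν hbindKaug hgint
  filter_upwards [hint] with q hq
  have hKq : Kaug q = ENNReal.ofReal (α q.1 q.2) • ((Measure.dirac q.2).prod (P q.2)) +
      ENNReal.ofReal (1 - α q.1 q.2) • ((Measure.dirac q.1).prod (P q.1)) := by
    rw [← hKaug q.1 q.2, Prod.mk.eta]
  rw [hKq] at hq
  have hq1 : Integrable g' (ENNReal.ofReal (α q.1 q.2) • ((Measure.dirac q.2).prod (P q.2))) :=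
    hq.mono_measure (Measure.le_add_right le_rfl)
  have hq2 : Integrable g'
      (ENNReal.ofReal (1 - α q.1 q.2) • ((Measure.dirac q.1).prod (P q.1))) :=
    hq.mono_measure (Measure.le_add_left le_rfl)
  have key : ∀ (t : ℝ) (z : G), 0 ≤ t →
      Integrable g' (ENNReal.ofReal t • ((Measure.dirac z).prod (P z))) →
      (ENNReal.ofReal t).toReal • ∫ u, g' u ∂((Measure.dirac z).prod (P z)) =
        t * qop P g' z := by
    intro t z ht hint'
    rcases eq_or_lt_of_le ht with h0 | hpos
    · rw [← h0]
      simp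
    · have hne : ENNReal.ofReal t ≠ 0 := by
        simp only [ne_eq, ENNReal.ofReal_eq_zero, not_le]
        exact hpos
      have hint'' : Integrable g' ((Measure.dirac z).prod (P z)) :=
        ((integrable_smul_measure hne ENNReal.ofReal_ne_top).mp hint')
      have hmap : (Measure.dirac z).prod (P z) = (P z).map (Prod.mk z) :=
        Measure.dirac_prod z
      have hAESM : AEStronglyMeasurable g' ((P z).map (Prod.mk z)) := by
        rw [← hmap]; exact hint''.1
      rw [ENNReal.toReal_ofReal ht, hmap,
        integral_map measurable_prodMk_left.aemeasurable hAESM]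
      rfl
  calc kop Kaug g' q
      = (ENNReal.ofReal (α q.1 q.2)).toReal • ∫ u, g' u ∂((Measure.dirac q.2).prod (P q.2)) +
        (ENNReal.ofReal (1 - α q.1 q.2)).toReal •
          ∫ u, g' u ∂((Measure.dirac q.1).prod (P q.1)) := by
        rw [kop, hKq, integral_add_measure hq1 hq2, integral_smul_measure,
          integral_smul_measure]
    _ = α q.1 q.2 * qop P g' q.2 + (1 - α q.1 q.2) * qop P g' q.1 := by
        rw [key (α q.1 q.2) q.2 (hα0 q.1 q.2) hq1,
          key (1 - α q.1 q.2) q.1 (by linarith [hα1 q.1 q.2]) hq2]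
    _ = top α (qop P g') q := rfl

include hρm hρ0 hZpos hμ hpm hp0 hP hr hα hν hK in
lemma selfadj (hνprob : IsProbabilityMeasure ν) {u v : G → ℝ}
    (hu : MemLp u 2 μ) (hv : MemLp v 2 μ) (hum : Measurable u) (hvm : Measurable v) :
    ∫ x, kop K u x * v x ∂μ = ∫ x, u x * kop K v x ∂μ := by
  have hμprob : IsProbabilityMeasure μ := by
    constructor
    have h := hνprob.measure_univ
    rw [hν, Measure.compProd_apply_univ] at h
    exact h
  have hαm : Measurable (fun q : G × G => α q.1 q.2) := alpha_meas ρ p r α hpm hρm hr hα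
  have hα0 : ∀ a b, 0 ≤ α a b := alpha_nonneg ρ p r α hρ0 hp0 hr hα
  have hα1 : ∀ a b, α a b ≤ 1 := alpha_le_one ρ p r α hρ0 hp0 hr hα
  -- L² of compositions with fst
  have fstL2 : ∀ w : G → ℝ, Measurable w → MemLp w 2 μ →
      MemLp (fun q : G × G => w q.1) 2 ν := by
    intro w hwm hw
    refine ⟨(hwm.comp measurable_fst).aestronglyMeasurable, ?_⟩
    rw [l2norm]
    have he : ∫⁻ q : G × G, (‖w q.1‖₊ : ℝ≥0∞) ^ 2 ∂ν = ∫⁻ x, (‖w x‖₊ : ℝ≥0∞) ^ 2 ∂μ :=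
      lint_fst μ P ν hν _ (hwm.nnnorm.coe_nnreal_ennreal.pow_const 2)
    rw [he]
    exact ENNReal.rpow_lt_top_of_nonneg (by norm_num) (l2fin hw)
  -- Integrability of α-weighted cross terms
  have IAgen : ∀ w₁ w₂ : G → ℝ, Measurable w₁ → Measurable w₂ → MemLp w₁ 2 μ →
      MemLp w₂ 2 μ → Integrable (fun q : G × G => α q.1 q.2 * (w₁ q.2 * w₂ q.1)) ν := by
    intro w₁ w₂ hw₁m hw₂m hw₁ hw₂
    refine ⟨(hαm.mul ((hw₁m.comp measurable_snd).mul
      (hw₂m.comp measurable_fst))).aestronglyMeasurable, ?_⟩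
    have hpt : ∀ q : G × G, (‖α q.1 q.2 * (w₁ q.2 * w₂ q.1)‖₊ : ℝ≥0∞) ≤
        ENNReal.ofReal (α q.1 q.2) * ((‖w₁ q.2‖₊ : ℝ≥0∞) ^ 2 + (‖w₂ q.1‖₊ : ℝ≥0∞) ^ 2) := by
      intro q
      have h1 : (‖α q.1 q.2 * (w₁ q.2 * w₂ q.1)‖₊ : ℝ≥0∞) =
          ENNReal.ofReal (α q.1 q.2) * ((‖w₁ q.2‖₊ : ℝ≥0∞) * (‖w₂ q.1‖₊ : ℝ≥0∞)) := by
        rw [← ofReal_norm_eq_coe_nnnorm, norm_mul, Real.norm_of_nonneg (hα0 q.1 q.2),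
          ENNReal.ofReal_mul (hα0 q.1 q.2), ofReal_norm_eq_coe_nnnorm,
          nnnorm_mul, ENNReal.coe_mul]
      rw [h1]
      exact mul_le_mul_right (mul_le_sq_add _ _) _
    have hm1 : Measurable fun q : G × G => (‖w₁ q.2‖₊ : ℝ≥0∞) ^ 2 :=
      (hw₁m.nnnorm.coe_nnreal_ennreal.pow_const 2).comp measurable_snd
    have hm2 : Measurable fun q : G × G => (‖w₂ q.1‖₊ : ℝ≥0∞) ^ 2 :=
      (hw₂m.nnnorm.coe_nnreal_ennreal.pow_const 2).comp measurable_fst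
    have hbound : ∫⁻ q, (‖α q.1 q.2 * (w₁ q.2 * w₂ q.1)‖₊ : ℝ≥0∞) ∂ν ≤
        ∫⁻ q : G × G, ENNReal.ofReal (α q.1 q.2) * (‖w₁ q.2‖₊ : ℝ≥0∞) ^ 2 ∂ν +
        ∫⁻ q : G × G, ENNReal.ofReal (α q.1 q.2) * (‖w₂ q.1‖₊ : ℝ≥0∞) ^ 2 ∂ν := by
      rw [← lintegral_add_left (meas_mulp hαm.ennreal_ofReal hm1)]
      refine le_trans (lintegral_mono hpt) (le_of_eq (lintegral_congr fun q => ?_))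
      ring
    have ht1 : ∫⁻ q : G × G, ENNReal.ofReal (α q.1 q.2) * (‖w₁ q.2‖₊ : ℝ≥0∞) ^ 2 ∂ν ≤
        ∫⁻ x, (‖w₁ x‖₊ : ℝ≥0∞) ^ 2 ∂μ := by
      rw [lsym μ₀ ρ Z μ P p r α ν hρm hρ0 hZpos hμ hpm hp0 hP hr hα hν
        (fun q => (‖w₁ q.2‖₊ : ℝ≥0∞) ^ 2) hm1]
      simp only [Prod.snd_swap]
      calc ∫⁻ q : G × G, ENNReal.ofReal (α q.1 q.2) * (‖w₁ q.1‖₊ : ℝ≥0∞) ^ 2 ∂ν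
          ≤ ∫⁻ q : G × G, (‖w₁ q.1‖₊ : ℝ≥0∞) ^ 2 ∂ν := by
            refine lintegral_mono fun q => ?_
            calc ENNReal.ofReal (α q.1 q.2) * (‖w₁ q.1‖₊ : ℝ≥0∞) ^ 2 ≤
                1 * (‖w₁ q.1‖₊ : ℝ≥0∞) ^ 2 :=
                  mul_le_mul_left (ENNReal.ofReal_le_one.mpr (hα1 q.1 q.2)) _
              _ = (‖w₁ q.1‖₊ : ℝ≥0∞) ^ 2 := one_mul _
        _ = ∫⁻ x, (‖w₁ x‖₊ : ℝ≥0∞) ^ 2 ∂μ :=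
            lint_fst μ P ν hν _ (hw₁m.nnnorm.coe_nnreal_ennreal.pow_const 2)
    have ht2 : ∫⁻ q : G × G, ENNReal.ofReal (α q.1 q.2) * (‖w₂ q.1‖₊ : ℝ≥0∞) ^ 2 ∂ν ≤
        ∫⁻ x, (‖w₂ x‖₊ : ℝ≥0∞) ^ 2 ∂μ := by
      calc ∫⁻ q : G × G, ENNReal.ofReal (α q.1 q.2) * (‖w₂ q.1‖₊ : ℝ≥0∞) ^ 2 ∂ν
          ≤ ∫⁻ q : G × G, (‖w₂ q.1‖₊ : ℝ≥0∞) ^ 2 ∂ν := by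
            refine lintegral_mono fun q => ?_
            calc ENNReal.ofReal (α q.1 q.2) * (‖w₂ q.1‖₊ : ℝ≥0∞) ^ 2 ≤
                1 * (‖w₂ q.1‖₊ : ℝ≥0∞) ^ 2 :=
                  mul_le_mul_left (ENNReal.ofReal_le_one.mpr (hα1 q.1 q.2)) _
              _ = (‖w₂ q.1‖₊ : ℝ≥0∞) ^ 2 := one_mul _
        _ = ∫⁻ x, (‖w₂ x‖₊ : ℝ≥0∞) ^ 2 ∂μ :=
            lint_fst μ P ν hν _ (hw₂m.nnnorm.coe_nnreal_ennreal.pow_const 2)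
    calc ∫⁻ q, (‖α q.1 q.2 * (w₁ q.2 * w₂ q.1)‖₊ : ℝ≥0∞) ∂ν
        ≤ ∫⁻ q : G × G, ENNReal.ofReal (α q.1 q.2) * (‖w₁ q.2‖₊ : ℝ≥0∞) ^ 2 ∂ν +
          ∫⁻ q : G × G, ENNReal.ofReal (α q.1 q.2) * (‖w₂ q.1‖₊ : ℝ≥0∞) ^ 2 ∂ν := hbound
      _ ≤ ∫⁻ x, (‖w₁ x‖₊ : ℝ≥0∞) ^ 2 ∂μ + ∫⁻ x, (‖w₂ x‖₊ : ℝ≥0∞) ^ 2 ∂μ := add_le_add ht1 ht2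
      _ < ∞ := by
          rw [ENNReal.add_lt_top]
          exact ⟨(l2fin hw₁).lt_top, (l2fin hw₂).lt_top⟩
  -- Integrability of (1-α)-weighted diagonal terms
  have IBgen : Integrable (fun q : G × G => (1 - α q.1 q.2) * (u q.1 * v q.1)) ν := by
    have hbase : Integrable (fun q : G × G => u q.1 * v q.1) ν :=
      l2_mul_int ν _ _ (fstL2 u hum hu) (fstL2 v hvm hv)
    refine hbase.abs.mono' ((measurable_const.sub hαm).mul
      ((hum.comp measurable_fst).mul (hvm.comp measurable_fst))).aestronglyMeasurable
      (ae_of_all _ fun q => ?_)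
    rw [Real.norm_eq_abs, abs_mul]
    have h1 : |1 - α q.1 q.2| ≤ 1 := by
      rw [abs_le]
      exact ⟨by linarith [hα1 q.1 q.2], by linarith [hα0 q.1 q.2]⟩
    calc |1 - α q.1 q.2| * |u q.1 * v q.1| ≤ 1 * |u q.1 * v q.1| :=
          mul_le_mul_of_nonneg_right h1 (abs_nonneg _)
      _ = |u q.1 * v q.1| := one_mul _
  have IA := IAgen u v hum hvm hu hv
  have IA' := IAgen v u hvm hum hv hu
  -- main computation for a generic pair: ∫ kop K w₁ * w₂
  have comp : ∀ w₁ w₂ : G → ℝ, Measurable w₁ → Measurable w₂ → MemLp w₁ 2 μ →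
      MemLp w₂ 2 μ →
      Integrable (fun q : G × G => (1 - α q.1 q.2) * (w₁ q.1 * w₂ q.1)) ν →
      ∫ x, kop K w₁ x * w₂ x ∂μ =
        ∫ q : G × G, α q.1 q.2 * (w₁ q.2 * w₂ q.1) ∂ν +
        ∫ q : G × G, (1 - α q.1 q.2) * (w₁ q.1 * w₂ q.1) ∂ν := by
    intro w₁ w₂ hw₁m hw₂m hw₁ hw₂ hIB
    have hIA := IAgen w₁ w₂ hw₁m hw₂m hw₁ hw₂
    have hIF : Integrable (fun q : G × G => top α w₁ q * w₂ q.1) ν := by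
      refine (hIA.add hIB).congr (ae_of_all _ fun q => ?_)
      show α q.1 q.2 * (w₁ q.2 * w₂ q.1) + (1 - α q.1 q.2) * (w₁ q.1 * w₂ q.1) =
        top α w₁ q * w₂ q.1
      rw [top]
      ring
    have e1 : ∫ x, kop K w₁ x * w₂ x ∂μ = ∫ x, qop P (top α w₁) x * w₂ x ∂μ := by
      refine integral_congr_ae ?_
      filter_upwards [B1 μ₀ ρ Z μ P p r α ν hρm hρ0 hZpos hμ hpm hp0 hP hr hα hν K hK
        hμprob hw₁] with x hx
      rw [hx]
    have e2 : ∫ q : G × G, top α w₁ q * w₂ q.1 ∂ν = ∫ x, qop P (top α w₁) x * w₂ x ∂μ := by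
      rw [hν] at hIF ⊢
      rw [MeasureTheory.Measure.integral_compProd hIF]
      refine integral_congr_ae (ae_of_all _ fun x => ?_)
      exact integral_mul_const (w₂ x) _
    have e3 : ∫ q : G × G, top α w₁ q * w₂ q.1 ∂ν =
        ∫ q : G × G, α q.1 q.2 * (w₁ q.2 * w₂ q.1) ∂ν +
        ∫ q : G × G, (1 - α q.1 q.2) * (w₁ q.1 * w₂ q.1) ∂ν := by
      rw [← integral_add hIA hIB]
      refine integral_congr_ae (ae_of_all _ fun q => ?_)
      show top α w₁ q * w₂ q.1 =
        α q.1 q.2 * (w₁ q.2 * w₂ q.1) + (1 - α q.1 q.2) * (w₁ q.1 * w₂ q.1)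
      rw [top]
      ring
    rw [e1, ← e2, e3]
  have comp1 := comp u v hum hvm hu hv IBgen
  have IBgen' : Integrable (fun q : G × G => (1 - α q.1 q.2) * (v q.1 * u q.1)) ν := by
    refine IBgen.congr (ae_of_all _ fun q => ?_)
    ring_nf
  have comp2 := comp v u hvm hum hv hu IBgen'
  -- symmetry bridge
  obtain ⟨_, hsymeq⟩ := bsym μ₀ ρ Z μ P p r α ν hρm hρ0 hZpos hμ hpm hp0 hP hr hα hν
    (fun q => u q.2 * v q.1) ((hum.comp measurable_snd).mul (hvm.comp measurable_fst)) IA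
  simp only [Prod.fst_swap, Prod.snd_swap] at hsymeq
  -- conclude
  have hKvu : ∫ x, u x * kop K v x ∂μ = ∫ x, kop K v x * u x ∂μ := by
    refine integral_congr_ae (ae_of_all _ fun x => ?_)
    ring
  rw [comp1, hKvu, comp2, hsymeq]
  congr 1
  · refine integral_congr_ae (ae_of_all _ fun q => ?_)
    ring
  · refine integral_congr_ae (ae_of_all _ fun q => ?_)
    ring

end MH

end MHAux

/-- Norm comparisons between the MH operator K on L²₀(μ) and the
augmented operator K_aug on L²₀(ν), expressed via the least-bound characterization
of operator norms: for n ≥ 2, ‖Kⁿ‖ ≤ ‖K_aug^{n-1}‖ and ‖K_augⁿ‖ ≤ ‖K^{n-1}‖;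
moreover ‖K‖ ≤ ‖K_aug‖ and the spectral radius of K_aug is at most ‖K‖
(i.e. ‖K_augⁿ‖ ≤ ‖K‖^{n-1} for any upper bound of ‖K‖). -/
theorem norm_comparisons_K_Kaug
    {G : Type*} [MeasurableSpace G]
    (μ₀ : Measure G) [SigmaFinite μ₀]
    (ρ : G → ℝ) (hρm : Measurable ρ) (hρ0 : ∀ x, 0 ≤ ρ x) (hρint : Integrable ρ μ₀)
    (Z : ℝ) (hZ : Z = ∫ x, ρ x ∂μ₀) (hZpos : 0 < Z)
    (μ : Measure G) [SFinite μ]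
    (hμ : μ = μ₀.withDensity fun x => ENNReal.ofReal (ρ x / Z))
    (P : Kernel G G) [IsMarkovKernel P]
    (p : G → G → ℝ) (hpm : Measurable (Function.uncurry p)) (hp0 : ∀ x y, 0 ≤ p x y)
    (hP : ∀ x, P x = μ₀.withDensity fun y => ENNReal.ofReal (p x y))
    (hpos : ∀ x y, 0 < ρ y → 0 < p x y)
    (bar : G → G → ℝ) (hbar : ∀ x y, bar x y = if 0 < ρ y then ρ y / p x y else 0)
    (r : G → G → ℝ)
    (hr : ∀ x y, r x y = if 0 < ρ x * p x y then ρ y * p y x / (ρ x * p x y) else 1)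
    (α : G → G → ℝ) (hα : ∀ x y, α x y = min 1 (r x y))
    (K : Kernel G G) [IsMarkovKernel K]
    (hK : ∀ x, K x = (P x).withDensity (fun y => ENNReal.ofReal (α x y)) +
      ENNReal.ofReal (∫ y, (1 - α x y) ∂(P x)) • Measure.dirac x)
    (Kaug : Kernel (G × G) (G × G)) [IsMarkovKernel Kaug]
    (hKaug : ∀ x y, Kaug (x, y) =
      ENNReal.ofReal (α x y) • ((Measure.dirac y).prod (P y)) +
      ENNReal.ofReal (1 - α x y) • ((Measure.dirac x).prod (P x)))
    (ν : Measure (G × G)) (hν : ν = μ.compProd P)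
    (KP : ℕ → Kernel G G) (hKP1 : KP 1 = K)
    (hKPs : ∀ n, 1 ≤ n → KP (n + 1) = K ∘ₖ KP n)
    (KaugP : ℕ → Kernel (G × G) (G × G)) (hKaugP1 : KaugP 1 = Kaug)
    (hKaugPs : ∀ n, 1 ≤ n → KaugP (n + 1) = Kaug ∘ₖ KaugP n) :
    -- ‖Kⁿ‖ ≤ ‖K_aug^{n-1}‖ for n ≥ 2
    (∀ n, 2 ≤ n → ∀ c : ℝ, 0 ≤ c →
      (∀ g : G × G → ℝ, MemLp g 2 ν → ∫ q, g q ∂ν = 0 →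
        eLpNorm (fun q => ∫ u, g u ∂(KaugP (n - 1) q)) 2 ν ≤
          ENNReal.ofReal c * eLpNorm g 2 ν) →
      (∀ f : G → ℝ, MemLp f 2 μ → ∫ x, f x ∂μ = 0 →
        eLpNorm (fun x => ∫ z, f z ∂(KP n x)) 2 μ ≤
          ENNReal.ofReal c * eLpNorm f 2 μ)) ∧
    -- ‖K_augⁿ‖ ≤ ‖K^{n-1}‖ for n ≥ 2
    (∀ n, 2 ≤ n → ∀ c : ℝ, 0 ≤ c →
      (∀ f : G → ℝ, MemLp f 2 μ → ∫ x, f x ∂μ = 0 →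
        eLpNorm (fun x => ∫ z, f z ∂(KP (n - 1) x)) 2 μ ≤
          ENNReal.ofReal c * eLpNorm f 2 μ) →
      (∀ g : G × G → ℝ, MemLp g 2 ν → ∫ q, g q ∂ν = 0 →
        eLpNorm (fun q => ∫ u, g u ∂(KaugP n q)) 2 ν ≤
          ENNReal.ofReal c * eLpNorm g 2 ν)) ∧
    -- ‖K‖ ≤ ‖K_aug‖
    (∀ c : ℝ, 0 ≤ c →
      (∀ g : G × G → ℝ, MemLp g 2 ν → ∫ q, g q ∂ν = 0 →
        eLpNorm (fun q => ∫ u, g u ∂(Kaug q)) 2 ν ≤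
          ENNReal.ofReal c * eLpNorm g 2 ν) →
      (∀ f : G → ℝ, MemLp f 2 μ → ∫ x, f x ∂μ = 0 →
        eLpNorm (fun x => ∫ z, f z ∂(K x)) 2 μ ≤
          ENNReal.ofReal c * eLpNorm f 2 μ)) ∧
    -- spectral radius of K_aug is at most ‖K‖
    (∀ c : ℝ, 0 ≤ c →
      (∀ f : G → ℝ, MemLp f 2 μ → ∫ x, f x ∂μ = 0 →
        eLpNorm (fun x => ∫ z, f z ∂(K x)) 2 μ ≤
          ENNReal.ofReal c * eLpNorm f 2 μ) →
      (∀ n, 2 ≤ n → ∀ g : G × G → ℝ, MemLp g 2 ν → ∫ q, g q ∂ν = 0 →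
        eLpNorm (fun q => ∫ u, g u ∂(KaugP n q)) 2 ν ≤
          ENNReal.ofReal (c ^ (n - 1)) * eLpNorm g 2 ν)) := by
  classical
  haveI hμprob : IsProbabilityMeasure μ :=
    MHAux.mu_prob μ₀ ρ Z μ hρm hρ0 hρint hZ hZpos hμ
  haveI hνprob : IsProbabilityMeasure ν := by rw [hν]; infer_instance
  have hbindK : μ.bind K = μ :=
    MHAux.bindK μ₀ ρ Z μ P p r α hρm hρ0 hZpos hμ hpm hp0 hP hr hα K hK
  have hbindKaug : ν.bind Kaug = ν :=
    MHAux.bindKaug μ₀ ρ Z μ P p r α ν hρm hρ0 hZpos hμ hpm hp0 hP hr hα hν Kaug hKaug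
  have hKPmk := MHAux.iter_markov K KP hKP1 hKPs
  have hKaugmk := MHAux.iter_markov Kaug KaugP hKaugP1 hKaugPs
  have hKPinv := MHAux.iter_inv K KP μ hKP1 hKPs hbindK
  have hKauginv := MHAux.iter_inv Kaug KaugP ν hKaugP1 hKaugPs hbindKaug
  have hB1 : ∀ f : G → ℝ, MemLp f 2 μ → MHAux.kop K f =ᵐ[μ] MHAux.qop P (MHAux.top α f) :=
    fun f hf => MHAux.B1 μ₀ ρ Z μ P p r α ν hρm hρ0 hZpos hμ hpm hp0 hP hr hα hν K hK hμprob hf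
  have hB2 : ∀ g : G × G → ℝ, MemLp g 2 ν →
      MHAux.kop Kaug g =ᵐ[ν] MHAux.top α (MHAux.qop P g) := fun g hg =>
    MHAux.B2 μ₀ ρ Z μ P p r α ν hρm hρ0 hZpos hμ hpm hp0 hP hr hα hν Kaug hKaug hνprob hg
  have hT : ∀ f : G → ℝ, MemLp f 2 μ → MemLp (MHAux.top α f) 2 ν ∧
      eLpNorm (MHAux.top α f) 2 ν ≤ eLpNorm f 2 μ ∧
      ∫ q, MHAux.top α f q ∂ν = ∫ x, f x ∂μ := fun f hf =>
    MHAux.top_facts μ₀ ρ Z μ P p r α ν hρm hρ0 hZpos hμ hpm hp0 hP hr hα hν hνprob hf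
  have hQ : ∀ g : G × G → ℝ, MemLp g 2 ν → MemLp (MHAux.qop P g) 2 μ ∧
      eLpNorm (MHAux.qop P g) 2 μ ≤ eLpNorm g 2 ν ∧
      ∫ x, MHAux.qop P g x ∂μ = ∫ q, g q ∂ν := fun g hg =>
    MHAux.qop_facts μ P ν hν hνprob hg
  have htopc : ∀ {u u' : G → ℝ}, u =ᵐ[μ] u' → MHAux.top α u =ᵐ[ν] MHAux.top α u' :=
    fun {u u'} h =>
    MHAux.top_congr μ₀ ρ Z μ P p r α ν hρm hρ0 hZpos hμ hpm hp0 hP hr hα hν h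
  have hkopK : ∀ {f : G → ℝ}, MemLp f 2 μ → MemLp (MHAux.kop K f) 2 μ ∧
      eLpNorm (MHAux.kop K f) 2 μ ≤ eLpNorm f 2 μ ∧
      ∫ x, MHAux.kop K f x ∂μ = ∫ x, f x ∂μ := fun {f} hf =>
    MHAux.kop_l2_facts K μ hbindK hf
  have hkopKaug : ∀ {g : G × G → ℝ}, MemLp g 2 ν → MemLp (MHAux.kop Kaug g) 2 ν ∧
      eLpNorm (MHAux.kop Kaug g) 2 ν ≤ eLpNorm g 2 ν ∧
      ∫ q, MHAux.kop Kaug g q ∂ν = ∫ q, g q ∂ν := fun {g} hg =>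
    MHAux.kop_l2_facts Kaug ν hbindKaug hg
  have hstepK : ∀ n, 1 ≤ n → ∀ {f : G → ℝ}, Integrable f μ →
      MHAux.kop (KP (n+1)) f =ᵐ[μ] MHAux.kop (KP n) (MHAux.kop K f) := fun n hn {f} hf =>
    MHAux.iter_step_ae K KP μ hKP1 hKPs hbindK n hn hf
  have hstepKaug : ∀ n, 1 ≤ n → ∀ {g : G × G → ℝ}, Integrable g ν →
      MHAux.kop (KaugP (n+1)) g =ᵐ[ν] MHAux.kop (KaugP n) (MHAux.kop Kaug g) :=
    fun n hn {g} hg => MHAux.iter_step_ae Kaug KaugP ν hKaugP1 hKaugPs hbindKaug n hn hg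
  have hiterK : ∀ n, 1 ≤ n → ∀ {f : G → ℝ}, MemLp f 2 μ →
      MemLp (MHAux.kop (KP n) f) 2 μ ∧ eLpNorm (MHAux.kop (KP n) f) 2 μ ≤ eLpNorm f 2 μ ∧
      ∫ x, MHAux.kop (KP n) f x ∂μ = ∫ x, f x ∂μ := fun n hn {f} hf =>
    MHAux.iter_l2 K KP μ hKP1 hKPs hbindK n hn hf
  have hiterKaug : ∀ n, 1 ≤ n → ∀ {g : G × G → ℝ}, MemLp g 2 ν →
      MemLp (MHAux.kop (KaugP n) g) 2 ν ∧
      eLpNorm (MHAux.kop (KaugP n) g) 2 ν ≤ eLpNorm g 2 ν ∧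
      ∫ q, MHAux.kop (KaugP n) g q ∂ν = ∫ q, g q ∂ν := fun n hn {g} hg =>
    MHAux.iter_l2 Kaug KaugP ν hKaugP1 hKaugPs hbindKaug n hn hg
  have hKPcongr : ∀ n, 1 ≤ n → ∀ {f g : G → ℝ}, f =ᵐ[μ] g →
      MHAux.kop (KP n) f =ᵐ[μ] MHAux.kop (KP n) g := by
    intro n hn f g h
    haveI := hKPmk n hn
    exact MHAux.kop_congr_ae (KP n) μ (hKPinv n hn) h
  have hKaugPcongr : ∀ n, 1 ≤ n → ∀ {f g : G × G → ℝ}, f =ᵐ[ν] g →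
      MHAux.kop (KaugP n) f =ᵐ[ν] MHAux.kop (KaugP n) g := by
    intro n hn f g h
    haveI := hKaugmk n hn
    exact MHAux.kop_congr_ae (KaugP n) ν (hKauginv n hn) h
  -- composed identity: Kⁿ⁺² = Q ∘ K_augⁿ⁺¹ ∘ T
  have hC : ∀ m : ℕ, ∀ f : G → ℝ, MemLp f 2 μ →
      MHAux.kop (KP (m+2)) f =ᵐ[μ]
        MHAux.qop P (MHAux.kop (KaugP (m+1)) (MHAux.top α f)) := by
    intro m
    induction m with
    | zero =>
      intro f hf
      have e0 : MHAux.kop (KP 2) f =ᵐ[μ] MHAux.kop (KP 1) (MHAux.kop K f) :=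
        hstepK 1 le_rfl (hf.integrable one_le_two)
      rw [hKP1] at e0
      have e1 : MHAux.kop K (MHAux.kop K f) =ᵐ[μ] MHAux.kop K (MHAux.qop P (MHAux.top α f)) :=
        MHAux.kop_congr_ae K μ hbindK (hB1 f hf)
      have hTf := hT f hf
      have hQT := hQ (MHAux.top α f) hTf.1
      have e2 : MHAux.kop K (MHAux.qop P (MHAux.top α f)) =ᵐ[μ]
          MHAux.qop P (MHAux.top α (MHAux.qop P (MHAux.top α f))) := hB1 _ hQT.1
      have e3 : MHAux.top α (MHAux.qop P (MHAux.top α f)) =ᵐ[ν]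
          MHAux.kop Kaug (MHAux.top α f) := (hB2 _ hTf.1).symm
      have e4 := MHAux.qop_congr μ P ν hν e3
      rw [hKaugP1]
      exact e0.trans (e1.trans (e2.trans e4))
    | succ m ih =>
      intro f hf
      have hKf := hkopK hf
      have e0 : MHAux.kop (KP (m+3)) f =ᵐ[μ] MHAux.kop (KP (m+2)) (MHAux.kop K f) :=
        hstepK (m+2) (by omega) (hf.integrable one_le_two)
      have e1 := ih (MHAux.kop K f) hKf.1
      have hTf := hT f hf
      have t0 : MHAux.top α (MHAux.kop K f) =ᵐ[ν] MHAux.kop Kaug (MHAux.top α f) :=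
        (htopc (hB1 f hf)).trans (hB2 (MHAux.top α f) hTf.1).symm
      have t2 : MHAux.kop (KaugP (m+1)) (MHAux.top α (MHAux.kop K f)) =ᵐ[ν]
          MHAux.kop (KaugP (m+1)) (MHAux.kop Kaug (MHAux.top α f)) :=
        hKaugPcongr (m+1) (by omega) t0
      have t3 : MHAux.kop (KaugP (m+1)) (MHAux.kop Kaug (MHAux.top α f)) =ᵐ[ν]
          MHAux.kop (KaugP (m+2)) (MHAux.top α f) :=
        (hstepKaug (m+1) (by omega) (hTf.1.integrable one_le_two)).symm
      have e2 := MHAux.qop_congr μ P ν hν (t2.trans t3)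
      exact e0.trans (e1.trans e2)
  -- composed identity: K_augⁿ⁺² = T ∘ Kⁿ⁺¹ ∘ Q
  have hD : ∀ m : ℕ, ∀ g : G × G → ℝ, MemLp g 2 ν →
      MHAux.kop (KaugP (m+2)) g =ᵐ[ν]
        MHAux.top α (MHAux.kop (KP (m+1)) (MHAux.qop P g)) := by
    intro m
    induction m with
    | zero =>
      intro g hg
      have e0 : MHAux.kop (KaugP 2) g =ᵐ[ν] MHAux.kop (KaugP 1) (MHAux.kop Kaug g) :=
        hstepKaug 1 le_rfl (hg.integrable one_le_two)
      rw [hKaugP1] at e0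
      have e1 : MHAux.kop Kaug (MHAux.kop Kaug g) =ᵐ[ν]
          MHAux.kop Kaug (MHAux.top α (MHAux.qop P g)) :=
        MHAux.kop_congr_ae Kaug ν hbindKaug (hB2 g hg)
      have hQg := hQ g hg
      have hTQ := hT (MHAux.qop P g) hQg.1
      have e2 : MHAux.kop Kaug (MHAux.top α (MHAux.qop P g)) =ᵐ[ν]
          MHAux.top α (MHAux.qop P (MHAux.top α (MHAux.qop P g))) := hB2 _ hTQ.1
      have e3 : MHAux.qop P (MHAux.top α (MHAux.qop P g)) =ᵐ[μ]
          MHAux.kop K (MHAux.qop P g) := (hB1 _ hQg.1).symm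
      have e4 := htopc e3
      rw [hKP1]
      exact e0.trans (e1.trans (e2.trans e4))
    | succ m ih =>
      intro g hg
      have hKg := hkopKaug hg
      have e0 : MHAux.kop (KaugP (m+3)) g =ᵐ[ν] MHAux.kop (KaugP (m+2)) (MHAux.kop Kaug g) :=
        hstepKaug (m+2) (by omega) (hg.integrable one_le_two)
      have e1 := ih (MHAux.kop Kaug g) hKg.1
      have hQg := hQ g hg
      have t0 : MHAux.qop P (MHAux.kop Kaug g) =ᵐ[μ] MHAux.kop K (MHAux.qop P g) :=
        (MHAux.qop_congr μ P ν hν (hB2 g hg)).trans (hB1 (MHAux.qop P g) hQg.1).symm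
      have t2 : MHAux.kop (KP (m+1)) (MHAux.qop P (MHAux.kop Kaug g)) =ᵐ[μ]
          MHAux.kop (KP (m+1)) (MHAux.kop K (MHAux.qop P g)) :=
        hKPcongr (m+1) (by omega) t0
      have t3 : MHAux.kop (KP (m+1)) (MHAux.kop K (MHAux.qop P g)) =ᵐ[μ]
          MHAux.kop (KP (m+2)) (MHAux.qop P g) :=
        (hstepK (m+1) (by omega) (hQg.1.integrable one_le_two)).symm
      have e2 := htopc (t2.trans t3)
      exact e0.trans (e1.trans e2)
  refine ⟨?_, ?_, ?_, ?_⟩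
  · -- part 1
    intro n hn c hc hyp f hf hf0
    obtain ⟨m, rfl⟩ : ∃ m, n = m + 2 := ⟨n - 2, by omega⟩
    have he : m + 2 - 1 = m + 1 := by omega
    rw [he] at hyp
    have hTf := hT f hf
    have hmem : MemLp (MHAux.kop (KaugP (m+1)) (MHAux.top α f)) 2 ν :=
      (hiterKaug (m+1) (by omega) hTf.1).1
    have hmean : ∫ q, MHAux.top α f q ∂ν = 0 := by rw [hTf.2.2, hf0]
    show eLpNorm (MHAux.kop (KP (m+2)) f) 2 μ ≤ ENNReal.ofReal c * eLpNorm f 2 μ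
    rw [eLpNorm_congr_ae (hC m f hf)]
    calc eLpNorm (MHAux.qop P (MHAux.kop (KaugP (m+1)) (MHAux.top α f))) 2 μ
        ≤ eLpNorm (MHAux.kop (KaugP (m+1)) (MHAux.top α f)) 2 ν := (hQ _ hmem).2.1
      _ ≤ ENNReal.ofReal c * eLpNorm (MHAux.top α f) 2 ν := hyp _ hTf.1 hmean
      _ ≤ ENNReal.ofReal c * eLpNorm f 2 μ := mul_le_mul_right hTf.2.1 _
  · -- part 2
    intro n hn c hc hyp g hg hg0
    obtain ⟨m, rfl⟩ : ∃ m, n = m + 2 := ⟨n - 2, by omega⟩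
    have he : m + 2 - 1 = m + 1 := by omega
    rw [he] at hyp
    have hQg := hQ g hg
    have hmem : MemLp (MHAux.kop (KP (m+1)) (MHAux.qop P g)) 2 μ :=
      (hiterK (m+1) (by omega) hQg.1).1
    have hmean : ∫ x, MHAux.qop P g x ∂μ = 0 := by rw [hQg.2.2, hg0]
    show eLpNorm (MHAux.kop (KaugP (m+2)) g) 2 ν ≤ ENNReal.ofReal c * eLpNorm g 2 ν
    rw [eLpNorm_congr_ae (hD m g hg)]
    calc eLpNorm (MHAux.top α (MHAux.kop (KP (m+1)) (MHAux.qop P g))) 2 ν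
        ≤ eLpNorm (MHAux.kop (KP (m+1)) (MHAux.qop P g)) 2 μ := (hT _ hmem).2.1
      _ ≤ ENNReal.ofReal c * eLpNorm (MHAux.qop P g) 2 μ := hyp _ hQg.1 hmean
      _ ≤ ENNReal.ofReal c * eLpNorm g 2 ν := mul_le_mul_right hQg.2.1 _
  · -- part 3 : ‖K‖ ≤ ‖K_aug‖
    intro c hc hyp f hf hf0
    have hiterB := MHAux.iter_bound Kaug KaugP ν hKaugP1 hKaugPs hbindKaug c
      (fun g hg hg0 => hyp g hg hg0)
    obtain ⟨f', hf'sm, hff'⟩ : ∃ f', StronglyMeasurable f' ∧ f =ᵐ[μ] f' :=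
      ⟨hf.1.mk f, hf.1.stronglyMeasurable_mk, hf.1.ae_eq_mk⟩
    have hf' : MemLp f' 2 μ := hf.ae_eq hff'
    have hf'0 : ∫ x, f' x ∂μ = 0 := by rw [← integral_congr_ae hff', hf0]
    have hf'meas : Measurable f' := hf'sm.measurable
    have hred1 : eLpNorm (MHAux.kop K f) 2 μ = eLpNorm (MHAux.kop K f') 2 μ :=
      eLpNorm_congr_ae (MHAux.kop_congr_ae K μ hbindK hff')
    have hred2 : eLpNorm f 2 μ = eLpNorm f' 2 μ := eLpNorm_congr_ae hff'
    set FIT : ℕ → (G → ℝ) → G → ℝ :=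
      fun n => Nat.rec (fun g => g) (fun _ rec g => rec (MHAux.kop K g)) n with hFITdef
    have hFITs : ∀ n (g : G → ℝ), FIT (n+1) g = FIT n (MHAux.kop K g) := fun n g => rfl
    have hEcomm : ∀ n (g : G → ℝ), FIT n (MHAux.kop K g) = MHAux.kop K (FIT n g) := by
      intro n
      induction n with
      | zero => intro g; rfl
      | succ n ih =>
        intro g
        rw [hFITs, hFITs, ih (MHAux.kop K g)]
    have hFfacts : ∀ n (g : G → ℝ), MemLp g 2 μ → MemLp (FIT n g) 2 μ ∧
        eLpNorm (FIT n g) 2 μ ≤ eLpNorm g 2 μ ∧ ∫ x, FIT n g x ∂μ = ∫ x, g x ∂μ := by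
      intro n
      induction n with
      | zero => intro g hg; exact ⟨hg, le_rfl, rfl⟩
      | succ n ih =>
        intro g hg
        have hK1 := hkopK hg
        obtain ⟨m1, m2, m3⟩ := ih (MHAux.kop K g) hK1.1
        exact ⟨m1, m2.trans hK1.2.1, by rw [hFITs, m3, hK1.2.2]⟩
    have hFmeas : ∀ n (g : G → ℝ), Measurable g → Measurable (FIT n g) := by
      intro n
      induction n with
      | zero => exact fun g hg => hg
      | succ n ih =>
        exact fun g hg =>
          ih (MHAux.kop K g) (MHAux.kop_sm hg.stronglyMeasurable K).measurable
    have hFrel : ∀ n, ∀ g : G → ℝ, MemLp g 2 μ →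
        MHAux.kop (KP (n+1)) g =ᵐ[μ] FIT (n+1) g := by
      intro n
      induction n with
      | zero =>
        intro g hg
        rw [hKP1]
        exact Filter.EventuallyEq.rfl
      | succ n ih =>
        intro g hg
        have e0 : MHAux.kop (KP (n+2)) g =ᵐ[μ] MHAux.kop (KP (n+1)) (MHAux.kop K g) :=
          hstepK (n+1) (by omega) (hg.integrable one_le_two)
        exact e0.trans (ih (MHAux.kop K g) (hkopK hg).1)
    set aseq : ℕ → ℝ≥0∞ := fun k => eLpNorm (FIT k f') 2 μ with haseq
    have hafin : ∀ k, aseq k ≠ ∞ := fun k => ((hFfacts k f' hf').2.1.trans_lt hf'.2).ne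
    have haconv : ∀ k, aseq (k+1) ^ 2 ≤ aseq k * aseq (k+2) := by
      intro k
      have hm0 := hFfacts k f' hf'
      have hm1 := hFfacts (k+1) f' hf'
      have hm2 := hFfacts (k+2) f' hf'
      have hmsk := hFmeas k f' hf'meas
      have hmsk1 := hFmeas (k+1) f' hf'meas
      have hsq := MHAux.elp_sq_int (FIT (k+1) f') μ hm1.1
      have hiter1 : FIT (k+1) f' = MHAux.kop K (FIT k f') := (hFITs k f').trans (hEcomm k f')
      have hiter2 : MHAux.kop K (FIT (k+1) f') = FIT (k+2) f' :=
        ((hFITs (k+1) f').trans (hEcomm (k+1) f')).symm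
      have hsa := MHAux.selfadj μ₀ ρ Z μ P p r α ν hρm hρ0 hZpos hμ hpm hp0 hP hr hα hν K hK
        hνprob hm0.1 hm1.1 hmsk hmsk1
      have e : ∫ x, FIT (k+1) f' x * FIT (k+1) f' x ∂μ =
          ∫ x, FIT k f' x * FIT (k+2) f' x ∂μ := by
        have h1 : ∫ x, FIT (k+1) f' x * FIT (k+1) f' x ∂μ =
            ∫ x, MHAux.kop K (FIT k f') x * FIT (k+1) f' x ∂μ := by rw [← hiter1]
        rw [h1, hsa, hiter2]
      calc aseq (k+1) ^ 2 = ENNReal.ofReal (∫ x, FIT (k+1) f' x * FIT (k+1) f' x ∂μ) := hsq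
        _ = ENNReal.ofReal (∫ x, FIT k f' x * FIT (k+2) f' x ∂μ) := by rw [e]
        _ ≤ aseq k * aseq (k+2) := MHAux.cs μ _ _ hm0.1 hm2.1
    have habd : ∀ n, 1 ≤ n → aseq (n+1) ≤ (ENNReal.ofReal c) ^ n * aseq 0 := by
      intro n hn
      obtain ⟨m, rfl⟩ : ∃ m, n = m + 1 := ⟨n - 1, by omega⟩
      have hTf := hT f' hf'
      have hTf0 : ∫ q, MHAux.top α f' q ∂ν = 0 := by rw [hTf.2.2, hf'0]
      have hmem : MemLp (MHAux.kop (KaugP (m+1)) (MHAux.top α f')) 2 ν :=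
        (hiterKaug (m+1) (by omega) hTf.1).1
      calc aseq (m+2) = eLpNorm (MHAux.kop (KP (m+2)) f') 2 μ :=
            (eLpNorm_congr_ae (hFrel (m+1) f' hf')).symm
        _ = eLpNorm (MHAux.qop P (MHAux.kop (KaugP (m+1)) (MHAux.top α f'))) 2 μ :=
            eLpNorm_congr_ae (hC m f' hf')
        _ ≤ eLpNorm (MHAux.kop (KaugP (m+1)) (MHAux.top α f')) 2 ν := (hQ _ hmem).2.1
        _ ≤ (ENNReal.ofReal c) ^ (m+1) * eLpNorm (MHAux.top α f') 2 ν :=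
            hiterB (m+1) (by omega) _ hTf.1 hTf0
        _ ≤ (ENNReal.ofReal c) ^ (m+1) * aseq 0 := mul_le_mul_right hTf.2.1 _
    set A : ℕ → ℝ := fun k => (aseq k).toReal with hAdef
    have hA : ∀ k, 0 ≤ A k := fun k => ENNReal.toReal_nonneg
    have hmono : A 1 ≤ A 0 := by
      have h1 : aseq 1 ≤ aseq 0 := (hFfacts 1 f' hf').2.1
      exact (ENNReal.toReal_le_toReal (hafin 1) (hafin 0)).mpr h1
    have hconvA : ∀ k, A (k+1) ^ 2 ≤ A k * A (k+2) := by
      intro k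
      have h := haconv k
      have hne : aseq k * aseq (k+2) ≠ ∞ := ENNReal.mul_ne_top (hafin k) (hafin (k+2))
      have := (ENNReal.toReal_le_toReal (by
          exact ENNReal.pow_ne_top (hafin (k+1))) hne).mpr h
      rw [ENNReal.toReal_pow, ENNReal.toReal_mul] at this
      exact this
    have hbdA : ∀ n, 1 ≤ n → A (n+1) ≤ c ^ n * A 0 := by
      intro n hn
      have h := habd n hn
      have hne : (ENNReal.ofReal c) ^ n * aseq 0 ≠ ∞ :=
        ENNReal.mul_ne_top (ENNReal.pow_ne_top ENNReal.ofReal_ne_top) (hafin 0)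
      have h2 := (ENNReal.toReal_le_toReal (hafin (n+1)) hne).mpr h
      rw [ENNReal.toReal_mul, ENNReal.toReal_pow, ENNReal.toReal_ofReal hc] at h2
      exact h2
    have hfinal := MHAux.seq_real A c hA hc hmono hconvA hbdA
    show eLpNorm (MHAux.kop K f) 2 μ ≤ ENNReal.ofReal c * eLpNorm f 2 μ
    rw [hred1, hred2]
    have hK1 : eLpNorm (MHAux.kop K f') 2 μ = aseq 1 := rfl
    have hK0 : eLpNorm f' 2 μ = aseq 0 := rfl
    rw [hK1, hK0]
    calc aseq 1 = ENNReal.ofReal (A 1) := (ENNReal.ofReal_toReal (hafin 1)).symm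
      _ ≤ ENNReal.ofReal (c * A 0) := ENNReal.ofReal_le_ofReal hfinal
      _ = ENNReal.ofReal c * ENNReal.ofReal (A 0) := ENNReal.ofReal_mul hc
      _ = ENNReal.ofReal c * aseq 0 := by rw [ENNReal.ofReal_toReal (hafin 0)]
  · -- part 4 : spectral radius bound
    intro c hc hyp n hn g hg hg0
    obtain ⟨m, rfl⟩ : ∃ m, n = m + 2 := ⟨n - 2, by omega⟩
    have hiterB := MHAux.iter_bound K KP μ hKP1 hKPs hbindK c
      (fun f hf hf0 => hyp f hf hf0)
    have hQg := hQ g hg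
    have hQg0 : ∫ x, MHAux.qop P g x ∂μ = 0 := by rw [hQg.2.2, hg0]
    have hmem : MemLp (MHAux.kop (KP (m+1)) (MHAux.qop P g)) 2 μ :=
      (hiterK (m+1) (by omega) hQg.1).1
    have he : m + 2 - 1 = m + 1 := by omega
    rw [he]
    show eLpNorm (MHAux.kop (KaugP (m+2)) g) 2 ν ≤
      ENNReal.ofReal (c ^ (m+1)) * eLpNorm g 2 ν
    rw [eLpNorm_congr_ae (hD m g hg), ENNReal.ofReal_pow hc]
    calc eLpNorm (MHAux.top α (MHAux.kop (KP (m+1)) (MHAux.qop P g))) 2 ν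
        ≤ eLpNorm (MHAux.kop (KP (m+1)) (MHAux.qop P g)) 2 μ := (hT _ hmem).2.1
      _ ≤ (ENNReal.ofReal c) ^ (m+1) * eLpNorm (MHAux.qop P g) 2 μ :=
          hiterB (m+1) (by omega) _ hQg.1 hQg0
      _ ≤ (ENNReal.ofReal c) ^ (m+1) * eLpNorm g 2 ν := mul_le_mul_right hQg.2.1 _
end

section
/- If the MH kernel $K$ (reversible w.r.t. $\mu$) is $L^2(\mu)$-geometrically ergodic, i.e., $r := \|\mathrm K\|_{L^2_0(\mu)\to L^2_0(\mu)} < 1$, then the augmented MH kernel $K_{\mathrm{aug}}$ is $L^2(\nu)$-geometrically ergodic: for every probability measure $\eta$ on $G\times G$ with $d\eta/d\nu \in L^2(\nu)$ and all $n \geq 2$, $d_{\mathrm{TV}}(\nu, \eta K_{\mathrm{aug}}^n) \leq \frac{1}{2r}\|d\eta/d\nu - 1\|_{L^2(\nu)}\, r^n$. -/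
open MeasureTheory ProbabilityTheory ENNReal Filter

set_option maxHeartbeats 2000000


section KaugAux

variable {G : Type*} [MeasurableSpace G]

/-- Auxiliary kernel: run `m` steps of `K`, then pair the state with a fresh proposal from `P`. -/
noncomputable def TAux (P K : Kernel G G) [IsSFiniteKernel P] [IsSFiniteKernel K] :
    ℕ → Kernel G (G × G)
  | 0 => Kernel.id ×ₖ P
  | (m + 1) => (TAux P K m) ∘ₖ K

instance TAux.instIsMarkovKernel (P K : Kernel G G) [IsMarkovKernel P] [IsMarkovKernel K]
    (m : ℕ) : IsMarkovKernel (TAux P K m) := by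
  induction m with
  | zero => rw [TAux]; infer_instance
  | succ m ih => rw [TAux]; infer_instance

lemma bind_add_smul {X Y : Type*} [MeasurableSpace X] [MeasurableSpace Y]
    (a b : ℝ≥0∞) (m₁ m₂ : Measure X) (κ : Kernel X Y) :
    (a • m₁ + b • m₂).bind (fun x => κ x)
      = a • (m₁.bind fun x => κ x) + b • (m₂.bind fun x => κ x) := by
  ext s hs
  rw [Measure.bind_apply hs κ.measurable.aemeasurable, lintegral_add_measure,
    lintegral_smul_measure, lintegral_smul_measure, Measure.add_apply,
    Measure.smul_apply, Measure.smul_apply, smul_eq_mul, smul_eq_mul,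
    Measure.bind_apply hs κ.measurable.aemeasurable,
    Measure.bind_apply hs κ.measurable.aemeasurable]
  rfl

lemma integral_sub_mean_sq {X : Type*} [MeasurableSpace X] (m : Measure X)
    [IsProbabilityMeasure m] {h : X → ℝ} (hi : Integrable h m)
    (hi2 : Integrable (fun x => h x ^ 2) m) :
    ∫ x, (h x - ∫ y, h y ∂m) ^ 2 ∂m = ∫ x, h x ^ 2 ∂m - (∫ y, h y ∂m) ^ 2 := by
  set c := ∫ y, h y ∂m with hc
  have hpt : ∀ x, (h x - c) ^ 2 = h x ^ 2 - (2 * c) * h x + c ^ 2 := by intro x; ring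
  simp_rw [hpt]
  have h1 : Integrable (fun x => h x ^ 2 - 2 * c * h x) m := by
    exact hi2.sub (hi.const_mul _)
  rw [integral_add (f := fun x => h x ^ 2 - 2 * c * h x) (g := fun _ => c ^ 2) h1
      (integrable_const _),
    integral_sub (f := fun x => h x ^ 2) (g := fun x => 2 * c * h x) hi2 (hi.const_mul _),
    integral_const_mul, integral_const]
  simp [← hc]
  ring

lemma eLpNorm_two_eq_sqrt {X : Type*} [MeasurableSpace X] {m : Measure X} {f : X → ℝ}
    (hf : MemLp f 2 m) :
    eLpNorm f 2 m = ENNReal.ofReal (Real.sqrt (∫ x, f x ^ 2 ∂m)) := by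
  rw [hf.eLpNorm_eq_integral_rpow_norm two_ne_zero ENNReal.ofNat_ne_top]
  congr 1
  have h2 : (2 : ℝ≥0∞).toReal = (2 : ℝ) := by simp
  rw [h2, Real.sqrt_eq_rpow]
  have hint : ∫ x, ‖f x‖ ^ (2 : ℝ) ∂m = ∫ x, f x ^ 2 ∂m := by
    refine integral_congr_ae (Filter.Eventually.of_forall fun x => ?_)
    show ‖f x‖ ^ (2:ℝ) = f x ^ 2
    rw [Real.rpow_two, Real.norm_eq_abs, sq_abs]
  rw [hint]
  norm_num

end KaugAux

/-- If the MH kernel K has L²(μ)-spectral bound r < 1 on mean-zero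
functions, then the augmented kernel K_aug is L²(ν)-geometrically ergodic:
for any initial distribution η = g·ν with g ∈ L²(ν), and all n ≥ 2,
d_TV(ν, η K_augⁿ) ≤ (1/(2r)) ‖dη/dν - 1‖_{L²(ν)} rⁿ (stated as a bound for
every measurable set). -/
theorem Kaug_geometrically_ergodic
    {G : Type*} [MeasurableSpace G]
    (μ₀ : Measure G) [SigmaFinite μ₀]
    (ρ : G → ℝ) (hρm : Measurable ρ) (hρ0 : ∀ x, 0 ≤ ρ x) (hρint : Integrable ρ μ₀)
    (Z : ℝ) (hZ : Z = ∫ x, ρ x ∂μ₀) (hZpos : 0 < Z)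
    (μ : Measure G) [SFinite μ]
    (hμ : μ = μ₀.withDensity fun x => ENNReal.ofReal (ρ x / Z))
    (P : Kernel G G) [IsMarkovKernel P]
    (p : G → G → ℝ) (hpm : Measurable (Function.uncurry p)) (hp0 : ∀ x y, 0 ≤ p x y)
    (hP : ∀ x, P x = μ₀.withDensity fun y => ENNReal.ofReal (p x y))
    (hpos : ∀ x y, 0 < ρ y → 0 < p x y)
    (bar : G → G → ℝ) (hbar : ∀ x y, bar x y = if 0 < ρ y then ρ y / p x y else 0)
    (r : G → G → ℝ)
    (hr : ∀ x y, r x y = if 0 < ρ x * p x y then ρ y * p y x / (ρ x * p x y) else 1)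
    (α : G → G → ℝ) (hα : ∀ x y, α x y = min 1 (r x y))
    (K : Kernel G G) [IsMarkovKernel K]
    (hK : ∀ x, K x = (P x).withDensity (fun y => ENNReal.ofReal (α x y)) +
      ENNReal.ofReal (∫ y, (1 - α x y) ∂(P x)) • Measure.dirac x)
    (Kaug : Kernel (G × G) (G × G)) [IsMarkovKernel Kaug]
    (hKaug : ∀ x y, Kaug (x, y) =
      ENNReal.ofReal (α x y) • ((Measure.dirac y).prod (P y)) +
      ENNReal.ofReal (1 - α x y) • ((Measure.dirac x).prod (P x)))
    (ν : Measure (G × G)) (hν : ν = μ.compProd P)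
    (KaugP : ℕ → Kernel (G × G) (G × G)) (hKaugP1 : KaugP 1 = Kaug)
    (hKaugPs : ∀ n, 1 ≤ n → KaugP (n + 1) = Kaug ∘ₖ KaugP n)
    (rgap : ℝ) (hr0 : 0 < rgap) (hr1 : rgap < 1)
    (hnorm : ∀ f : G → ℝ, MemLp f 2 μ → ∫ x, f x ∂μ = 0 →
      eLpNorm (fun x => ∫ z, f z ∂(K x)) 2 μ ≤ ENNReal.ofReal rgap * eLpNorm f 2 μ)
    (g : G × G → ℝ) (hg0 : ∀ q, 0 ≤ g q) (hgm : Measurable g) (hgL2 : MemLp g 2 ν)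
    (η : Measure (G × G)) (hη : η = ν.withDensity fun q => ENNReal.ofReal (g q))
    [IsProbabilityMeasure η] :
    ∀ n, 2 ≤ n → ∀ A : Set (G × G), MeasurableSet A →
      |(ν A).toReal - ((η.bind fun q => KaugP n q) A).toReal| ≤
        (1 / (2 * rgap)) * (eLpNorm (fun q => g q - 1) 2 ν).toReal * rgap ^ n := by
  -- basic bounds for α
  have hr0' : ∀ x y, 0 ≤ r x y := by
    intro x y
    rw [hr]
    split
    · exact div_nonneg (mul_nonneg (hρ0 _) (hp0 _ _)) (mul_nonneg (hρ0 _) (hp0 _ _))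
    · norm_num
  have hα0 : ∀ x y, 0 ≤ α x y := by
    intro x y; rw [hα]; exact le_min zero_le_one (hr0' x y)
  have hα1 : ∀ x y, α x y ≤ 1 := by intro x y; rw [hα]; exact min_le_left _ _
  have hαm : Measurable (fun q : G × G => α q.1 q.2) := by
    have hrm : Measurable (fun q : G × G => r q.1 q.2) := by
      have : (fun q : G × G => r q.1 q.2) = fun q : G × G =>
          if 0 < ρ q.1 * Function.uncurry p q then
            ρ q.2 * Function.uncurry p (q.2, q.1) / (ρ q.1 * Function.uncurry p q) else 1 := by
        funext q; rw [hr]; rfl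
      rw [this]
      refine Measurable.ite ?_ ?_ measurable_const
      · exact measurableSet_lt measurable_const ((hρm.comp measurable_fst).mul hpm)
      · exact ((hρm.comp measurable_snd).mul (hpm.comp measurable_swap)).div
          ((hρm.comp measurable_fst).mul hpm)
    have : (fun q : G × G => α q.1 q.2) = fun q : G × G => min 1 (r q.1 q.2) := by
      funext q; rw [hα]
    rw [this]
    exact measurable_const.min hrm
  -- instances
  haveI hμprob : IsProbabilityMeasure μ := by
    constructor
    rw [hμ, withDensity_apply _ MeasurableSet.univ, setLIntegral_univ,
      ← ofReal_integral_eq_lintegral_ofReal (hρint.div_const Z)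
        (Filter.Eventually.of_forall fun x => div_nonneg (hρ0 x) hZpos.le)]
    rw [integral_div, ← hZ, div_self hZpos.ne', ENNReal.ofReal_one]
  haveI hνprob : IsProbabilityMeasure ν := by rw [hν]; infer_instance
  -- lintegral formulas
  have hμl : ∀ v : G → ℝ≥0∞, Measurable v →
      ∫⁻ x, v x ∂μ = ∫⁻ x, ENNReal.ofReal (ρ x / Z) * v x ∂μ₀ := by
    intro v hv
    rw [hμ, lintegral_withDensity_eq_lintegral_mul _ (hρm.div_const Z).ennreal_ofReal hv]
    rfl
  have hPl : ∀ x, ∀ v : G → ℝ≥0∞, Measurable v →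
      ∫⁻ y, v y ∂P x = ∫⁻ y, ENNReal.ofReal (p x y) * v y ∂μ₀ := by
    intro x v hv
    have hpx : Measurable fun y => p x y := hpm.comp measurable_prodMk_left
    rw [hP x, lintegral_withDensity_eq_lintegral_mul _ hpx.ennreal_ofReal hv]
    rfl
  have hαx : ∀ x, Measurable fun y => α x y := fun x => hαm.comp measurable_prodMk_left
  have h1mαint : ∀ x, Integrable (fun y => 1 - α x y) (P x) := by
    intro x
    refine (integrable_const (1:ℝ)).mono' ((measurable_const.sub (hαx x)).aestronglyMeasurable) ?_
    refine Filter.Eventually.of_forall fun y => ?_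
    rw [Real.norm_eq_abs, abs_le]
    constructor <;> nlinarith [hα0 x y, hα1 x y]
  have h1mα : ∀ x, ∫⁻ y, ENNReal.ofReal (1 - α x y) ∂P x
      = ENNReal.ofReal (∫ y, (1 - α x y) ∂P x) := by
    intro x
    rw [← ofReal_integral_eq_lintegral_ofReal (h1mαint x)
      (Filter.Eventually.of_forall fun y => by
        simp only [Pi.zero_apply]; nlinarith [hα1 x y])]
  have hKl : ∀ x, ∀ v : G → ℝ≥0∞, Measurable v →
      ∫⁻ y, v y ∂K x = (∫⁻ y, ENNReal.ofReal (α x y) * v y ∂P x)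
        + ENNReal.ofReal (∫ y, (1 - α x y) ∂(P x)) * v x := by
    intro x v hv
    rw [hK x, lintegral_add_measure, lintegral_smul_measure, lintegral_dirac' _ hv,
      lintegral_withDensity_eq_lintegral_mul _ (hαx x).ennreal_ofReal hv]
    rfl
  -- the symmetric weight
  have hsreal : ∀ x y, ρ x / Z * (p x y * α x y) = min (ρ x * p x y) (ρ y * p y x) / Z := by
    intro x y
    rcases lt_or_ge 0 (ρ x * p x y) with h | h
    · rw [hα, hr, if_pos h]
      have key : ρ x * p x y * min 1 (ρ y * p y x / (ρ x * p x y))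
          = min (ρ x * p x y) (ρ y * p y x) := by
        rw [mul_min_of_nonneg _ _ h.le, mul_one, mul_comm (ρ x * p x y),
          div_mul_cancel₀ _ h.ne']
      field_simp
      linarith [key]
    · have h0 : ρ x * p x y = 0 := le_antisymm h (mul_nonneg (hρ0 x) (hp0 x y))
      rw [min_eq_left (h0 ▸ mul_nonneg (hρ0 y) (hp0 y x) : ρ x * p x y ≤ ρ y * p y x)]
      rcases mul_eq_zero.mp h0 with h1 | h1 <;> rw [h0, h1] <;> ring
  have hwsym : ∀ x y, ENNReal.ofReal (ρ x / Z) * (ENNReal.ofReal (p x y)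
      * ENNReal.ofReal (α x y)) = ENNReal.ofReal (ρ y / Z) * (ENNReal.ofReal (p y x)
      * ENNReal.ofReal (α y x)) := by
    intro x y
    rw [← ENNReal.ofReal_mul (hp0 x y), ← ENNReal.ofReal_mul (div_nonneg (hρ0 x) hZpos.le),
      ← ENNReal.ofReal_mul (hp0 y x), ← ENNReal.ofReal_mul (div_nonneg (hρ0 y) hZpos.le),
      hsreal, hsreal, min_comm]
  -- measurability of kernel integrals
  have hm1 : ∀ v : G → ℝ≥0∞, Measurable v →
      Measurable fun x => ∫⁻ y, ENNReal.ofReal (α x y) * v y ∂P x := by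
    intro v hv
    have h : Measurable (Function.uncurry fun x y => ENNReal.ofReal (α x y) * v y) :=
      hαm.ennreal_ofReal.mul (hv.comp measurable_snd)
    exact h.lintegral_kernel_prod_right
  have hm2 : Measurable fun x => ∫⁻ y, ENNReal.ofReal (α x y) ∂P x := by
    have h : Measurable (Function.uncurry fun x y => ENNReal.ofReal (α x y)) :=
      hαm.ennreal_ofReal
    exact h.lintegral_kernel_prod_right
  -- core symmetry identity
  have key : ∀ v : G → ℝ≥0∞, Measurable v →
      ∫⁻ x, ∫⁻ y, ENNReal.ofReal (α x y) * v y ∂P x ∂μ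
        = ∫⁻ x, (∫⁻ y, ENNReal.ofReal (α x y) ∂P x) * v x ∂μ := by
    intro v hv
    have hWm : Measurable (fun q : G × G => ENNReal.ofReal (ρ q.1 / Z)
        * (ENNReal.ofReal (p q.1 q.2) * ENNReal.ofReal (α q.1 q.2))) := by
      exact ((hρm.comp measurable_fst).div_const Z).ennreal_ofReal.mul
        (hpm.ennreal_ofReal.mul hαm.ennreal_ofReal)
    have lhs_eq : ∫⁻ x, ∫⁻ y, ENNReal.ofReal (α x y) * v y ∂P x ∂μ
        = ∫⁻ x, ∫⁻ y, (ENNReal.ofReal (ρ x / Z)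
            * (ENNReal.ofReal (p x y) * ENNReal.ofReal (α x y))) * v y ∂μ₀ ∂μ₀ := by
      rw [hμl _ (hm1 v hv)]
      refine lintegral_congr fun x => ?_
      have hintm : Measurable fun y => ENNReal.ofReal (p x y) * (ENNReal.ofReal (α x y) * v y) := by
        exact (hpm.comp measurable_prodMk_left).ennreal_ofReal.mul
          (((hαx x).ennreal_ofReal).mul hv)
      rw [hPl x (fun y => ENNReal.ofReal (α x y) * v y) ((hαx x).ennreal_ofReal.mul hv), ← lintegral_const_mul _ hintm]
      refine lintegral_congr fun y => ?_
      ring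
    have rhs_eq : ∫⁻ x, (∫⁻ y, ENNReal.ofReal (α x y) ∂P x) * v x ∂μ
        = ∫⁻ x, ∫⁻ y, (ENNReal.ofReal (ρ x / Z)
            * (ENNReal.ofReal (p x y) * ENNReal.ofReal (α x y))) * v x ∂μ₀ ∂μ₀ := by
      rw [hμl (fun x => (∫⁻ y, ENNReal.ofReal (α x y) ∂P x) * v x) (hm2.mul hv)]
      refine lintegral_congr fun x => ?_
      have hintm : Measurable fun y => ENNReal.ofReal (p x y) * ENNReal.ofReal (α x y) := by
        exact (hpm.comp measurable_prodMk_left).ennreal_ofReal.mul ((hαx x).ennreal_ofReal)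
      have hintm2 : Measurable fun y =>
          ENNReal.ofReal (p x y) * ENNReal.ofReal (α x y) * v x := hintm.mul measurable_const
      rw [hPl x _ (hαx x).ennreal_ofReal, ← lintegral_mul_const _ hintm,
        ← lintegral_const_mul _ hintm2]
      refine lintegral_congr fun y => ?_
      ring
    rw [lhs_eq, rhs_eq]
    rw [lintegral_lintegral_swap ((hWm.mul (hv.comp measurable_snd)).aemeasurable)]
    refine lintegral_congr fun y => lintegral_congr fun x => ?_
    rw [hwsym]
  -- stationarity-type identity
  have key2 : ∀ v : G → ℝ≥0∞, Measurable v →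
      ∫⁻ x, ∫⁻ y, (ENNReal.ofReal (α x y) * v y
          + ENNReal.ofReal (1 - α x y) * v x) ∂P x ∂μ = ∫⁻ x, v x ∂μ := by
    intro v hv
    have hsplit : ∀ x, ∫⁻ y, (ENNReal.ofReal (α x y) * v y
        + ENNReal.ofReal (1 - α x y) * v x) ∂P x
        = (∫⁻ y, ENNReal.ofReal (α x y) * v y ∂P x)
          + (∫⁻ y, ENNReal.ofReal (1 - α x y) ∂P x) * v x := by
      intro x
      rw [lintegral_add_left (f := fun y => ENNReal.ofReal (α x y) * v y) ((hαx x).ennreal_ofReal.mul hv),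
        lintegral_mul_const (f := fun y => ENNReal.ofReal (1 - α x y)) _ (measurable_const.sub (hαx x)).ennreal_ofReal]
    simp_rw [hsplit]
    rw [lintegral_add_left (hm1 v hv), key v hv, ← lintegral_add_left (f := fun x => (∫⁻ y, ENNReal.ofReal (α x y) ∂P x) * v x) (hm2.mul hv)]
    refine lintegral_congr fun x => ?_
    rw [← add_mul, ← lintegral_add_left ((hαx x).ennreal_ofReal)]
    have heq1 : ∀ y, ENNReal.ofReal (α x y) + ENNReal.ofReal (1 - α x y) = 1 := by
      intro y
      rw [← ENNReal.ofReal_add (hα0 x y) (by nlinarith [hα1 x y]), add_sub_cancel,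
        ENNReal.ofReal_one]
    simp_rw [heq1]
    simp
  -- kernel structure lemmas
  have hpairK : ∀ w : G, (Kernel.id ×ₖ P) w = (Measure.dirac w).prod (P w) := by
    intro w
    rw [Kernel.prod_apply, Kernel.id_apply]
  have hstep : Kaug ∘ₖ (Kernel.id ×ₖ P) = (Kernel.id ×ₖ P) ∘ₖ K := by
    refine Kernel.ext fun w => Measure.ext fun B hB => ?_
    have humeas : Measurable fun z => (Kernel.id ×ₖ P) z B := Kernel.measurable_coe _ hB
    rw [Kernel.comp_apply' _ _ _ hB, Kernel.comp_apply' _ _ _ hB, hKl w _ humeas]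
    have hlhs : ∫⁻ q, Kaug q B ∂(Kernel.id ×ₖ P) w
        = ∫⁻ z, (ENNReal.ofReal (α w z) * (Kernel.id ×ₖ P) z B
            + ENNReal.ofReal (1 - α w z) * (Kernel.id ×ₖ P) w B) ∂P w := by
      rw [hpairK w, Measure.dirac_prod, lintegral_map (Kernel.measurable_coe _ hB)
        measurable_prodMk_left]
      refine lintegral_congr fun z => ?_
      rw [hKaug w z, Measure.add_apply, Measure.smul_apply, Measure.smul_apply,
        smul_eq_mul, smul_eq_mul, hpairK z]
      simp [Measure.dirac_prod]
    have hb1 : Measurable fun z => ENNReal.ofReal (α w z) * (Kernel.id ×ₖ P) z B :=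
      ((hαx w).ennreal_ofReal).mul humeas
    have hb2 : Measurable fun z => ENNReal.ofReal (1 - α w z) :=
      (measurable_const.sub (hαx w)).ennreal_ofReal
    rw [hlhs, lintegral_add_left hb1, lintegral_mul_const _ hb2, h1mα w]
  have hTsucc : ∀ m : ℕ, Kaug ∘ₖ TAux P K m = TAux P K (m + 1) := by
    intro m
    induction m with
    | zero => exact hstep
    | succ m ih =>
      show Kaug ∘ₖ (TAux P K m ∘ₖ K) = TAux P K (m + 1) ∘ₖ K
      rw [← Kernel.comp_assoc, ih]
  have hC : ∀ (m : ℕ) (x y : G), KaugP (m + 1) (x, y)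
      = ENNReal.ofReal (α x y) • (TAux P K m y)
        + ENNReal.ofReal (1 - α x y) • (TAux P K m x) := by
    intro m
    induction m with
    | zero =>
      intro x y
      rw [hKaugP1, hKaug, show TAux P K 0 = Kernel.id ×ₖ P from rfl, hpairK, hpairK]
    | succ m ih =>
      intro x y
      rw [hKaugPs (m + 1) (by omega), Kernel.comp_apply, ih x y,
        bind_add_smul _ _ _ _ Kaug, ← Kernel.comp_apply, ← Kernel.comp_apply, hTsucc m]
  -- stationarity of ν
  have hν1 : ν.bind (fun q => Kaug q) = ν := by
    refine Measure.ext fun B hB => ?_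
    rw [Measure.bind_apply hB Kaug.measurable.aemeasurable]
    have hint : ∀ q : G × G, Kaug q B
        = ENNReal.ofReal (α q.1 q.2) * (Kernel.id ×ₖ P) q.2 B
          + ENNReal.ofReal (1 - α q.1 q.2) * (Kernel.id ×ₖ P) q.1 B := by
      intro q
      rw [show q = (q.1, q.2) from rfl, hKaug q.1 q.2, Measure.add_apply, Measure.smul_apply,
        Measure.smul_apply, smul_eq_mul, smul_eq_mul, hpairK, hpairK]
    have hKm : Measurable fun q : G × G => Kaug q B := Kernel.measurable_coe _ hB
    rw [hν, Measure.lintegral_compProd hKm]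
    simp_rw [hint]
    rw [key2 _ (Kernel.measurable_coe _ hB), Measure.compProd_apply hB]
    refine lintegral_congr fun x => ?_
    rw [hpairK x, Measure.dirac_prod, Measure.map_apply measurable_prodMk_left hB]
  have hstatn : ∀ m : ℕ, ν.bind (fun q => KaugP (m + 1) q) = ν := by
    intro m
    induction m with
    | zero => rw [hKaugP1]; exact hν1
    | succ m ih =>
      rw [hKaugPs (m + 1) (by omega)]
      have : (fun q => (Kaug ∘ₖ KaugP (m + 1)) q) = fun q => (KaugP (m + 1) q).bind Kaug := by
        funext q; rw [Kernel.comp_apply]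
      rw [this, ← Measure.bind_bind (KaugP (m + 1)).measurable.aemeasurable Kaug.measurable.aemeasurable, ih, hν1]
  -- now fix n and A
  intro n hn A hA
  obtain ⟨m, rfl⟩ : ∃ m, n = m + 1 := ⟨n - 1, by omega⟩
  -- the functions ψ, c, φ
  set ψ : ℕ → G → ℝ := fun k w => ((TAux P K k) w A).toReal with hψdef
  set c : ℕ → ℝ := fun k => ∫ x, ψ k x ∂μ with hcdef
  set φ : ℕ → G → ℝ := fun k w => ψ k w - c k with hφdef
  have hψ0 : ∀ k w, 0 ≤ ψ k w := fun k w => ENNReal.toReal_nonneg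
  have hψ1 : ∀ k w, ψ k w ≤ 1 := by
    intro k w
    have := prob_le_one (μ := (TAux P K k) w) (s := A)
    simpa [hψdef] using ENNReal.toReal_mono ENNReal.one_ne_top this
  have hψmeas : ∀ k, Measurable (ψ k) := fun k => (Kernel.measurable_coe _ hA).ennreal_toReal
  have hψint : ∀ k (κ : Measure G), IsProbabilityMeasure κ → Integrable (ψ k) κ := by
    intro k κ hκ
    refine (integrable_const (1:ℝ)).mono' (hψmeas k).aestronglyMeasurable ?_
    refine Filter.Eventually.of_forall fun w => ?_
    rw [Real.norm_eq_abs, abs_of_nonneg (hψ0 k w)]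
    exact hψ1 k w
  have hc0 : ∀ k, 0 ≤ c k := fun k => integral_nonneg (fun w => hψ0 k w)
  have hc1 : ∀ k, c k ≤ 1 := by
    intro k
    calc ∫ x, ψ k x ∂μ ≤ ∫ _, (1:ℝ) ∂μ :=
          integral_mono (hψint k μ hμprob) (integrable_const _) (hψ1 k)
    _ = 1 := by simp
  have hφmeas : ∀ k, Measurable (φ k) := fun k => (hψmeas k).sub measurable_const
  have hφabs : ∀ k w, |φ k w| ≤ 1 := by
    intro k w
    rw [hφdef, abs_le]
    constructor <;> simp only <;> nlinarith [hψ0 k w, hψ1 k w, hc0 k, hc1 k]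
  have hφint : ∀ k, Integrable (φ k) μ := fun k => (hψint k μ hμprob).sub (integrable_const _)
  have hφ2int : ∀ k, Integrable (fun x => φ k x ^ 2) μ := by
    intro k
    refine (integrable_const (1:ℝ)).mono' (((hφmeas k).pow measurable_const).aestronglyMeasurable) ?_
    refine Filter.Eventually.of_forall fun w => ?_
    rw [Real.norm_eq_abs, abs_pow]
    nlinarith [hφabs k w, abs_nonneg (φ k w)]
  have hφL2 : ∀ k, MemLp (φ k) 2 μ := by
    intro k
    exact MemLp.of_bound (hφmeas k).aestronglyMeasurable 1
      (Filter.Eventually.of_forall fun w => by rw [Real.norm_eq_abs]; exact hφabs k w)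
  have hφmean : ∀ k, ∫ x, φ k x ∂μ = 0 := by
    intro k
    rw [hφdef]
    simp only
    rw [integral_sub (hψint k μ hμprob) (integrable_const _), integral_const]
    simp [hcdef]
  -- recursion for ψ
  have hψrec : ∀ k w, ψ (k + 1) w = ∫ z, ψ k z ∂K w := by
    intro k w
    have h1 : (TAux P K (k + 1)) w = ((K w).bind (TAux P K k)) := by
      rw [show TAux P K (k + 1) = TAux P K k ∘ₖ K from rfl, Kernel.comp_apply]
    rw [hψdef]
    simp only
    rw [h1, Measure.bind_apply hA (TAux P K k).measurable.aemeasurable,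
      ← integral_toReal ((Kernel.measurable_coe _ hA).aemeasurable) ?_]
    · exact Filter.Eventually.of_forall fun z => lt_of_le_of_lt (prob_le_one) ENNReal.one_lt_top
  -- one-step contraction
  have hKcontract : ∀ k, ∫ x, φ (k + 1) x ^ 2 ∂μ ≤ rgap ^ 2 * ∫ x, φ k x ^ 2 ∂μ := by
    intro k
    have hKφeq : ∀ x, (∫ z, φ k z ∂K x) = ψ (k + 1) x - c k := by
      intro x
      rw [hψrec k x, hφdef]
      simp only
      rw [integral_sub (hψint k (K x) inferInstance) (integrable_const _), integral_const]
      simp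
    have hKφmeas : Measurable fun x => ∫ z, φ k z ∂K x := by
      simp_rw [hKφeq]; exact (hψmeas (k + 1)).sub measurable_const
    have hKφabs : ∀ x, |∫ z, φ k z ∂K x| ≤ 2 := by
      intro x
      rw [hKφeq, abs_le]
      constructor <;> nlinarith [hψ0 (k+1) x, hψ1 (k+1) x, hc0 k, hc1 k]
    have hKφint : Integrable (fun x => ∫ z, φ k z ∂K x) μ := by
      refine (integrable_const (2:ℝ)).mono' hKφmeas.aestronglyMeasurable ?_
      exact Filter.Eventually.of_forall fun x => by rw [Real.norm_eq_abs]; exact hKφabs x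
    have hKφ2int : Integrable (fun x => (∫ z, φ k z ∂K x) ^ 2) μ := by
      refine (integrable_const (4:ℝ)).mono' ((hKφmeas.pow measurable_const).aestronglyMeasurable) ?_
      refine Filter.Eventually.of_forall fun x => ?_
      rw [Real.norm_eq_abs, abs_pow]
      nlinarith [hKφabs x, abs_nonneg (∫ z, φ k z ∂K x)]
    have hKφL2 : MemLp (fun x => ∫ z, φ k z ∂K x) 2 μ :=
      MemLp.of_bound hKφmeas.aestronglyMeasurable 2
        (Filter.Eventually.of_forall fun x => by rw [Real.norm_eq_abs]; exact hKφabs x)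
    -- φ (k+1) is the centered version of Kφ
    have hcenter : ∀ x, φ (k + 1) x = (∫ z, φ k z ∂K x) - ∫ y, (∫ z, φ k z ∂K y) ∂μ := by
      intro x
      have hmean : ∫ y, (∫ z, φ k z ∂K y) ∂μ = c (k + 1) - c k := by
        simp_rw [hKφeq]
        rw [integral_sub (hψint (k+1) μ hμprob) (integrable_const _), integral_const]
        simp [hcdef]
      rw [hmean, hKφeq, hφdef]
      simp only
      ring
    have hvar : ∫ x, φ (k + 1) x ^ 2 ∂μ ≤ ∫ x, (∫ z, φ k z ∂K x) ^ 2 ∂μ := by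
      simp_rw [hcenter]
      rw [integral_sub_mean_sq μ hKφint hKφ2int]
      nlinarith [sq_nonneg (∫ y, (∫ z, φ k z ∂K y) ∂μ)]
    -- use the spectral gap
    have hgap := hnorm (φ k) (hφL2 k) (hφmean k)
    rw [eLpNorm_two_eq_sqrt hKφL2, eLpNorm_two_eq_sqrt (hφL2 k),
      ← ENNReal.ofReal_mul hr0.le] at hgap
    have hgap' : Real.sqrt (∫ x, (∫ z, φ k z ∂K x) ^ 2 ∂μ)
        ≤ rgap * Real.sqrt (∫ x, φ k x ^ 2 ∂μ) := by
      have := (ENNReal.ofReal_le_ofReal_iff (by positivity)).mp hgap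
      exact this
    have h2 : ∫ x, (∫ z, φ k z ∂K x) ^ 2 ∂μ ≤ rgap ^ 2 * ∫ x, φ k x ^ 2 ∂μ := by
      have hl : (0:ℝ) ≤ ∫ x, (∫ z, φ k z ∂K x) ^ 2 ∂μ := integral_nonneg fun x => sq_nonneg _
      have hr' : (0:ℝ) ≤ ∫ x, φ k x ^ 2 ∂μ := integral_nonneg fun x => sq_nonneg _
      nlinarith [Real.sq_sqrt hl, Real.sq_sqrt hr', Real.sqrt_nonneg (∫ x, (∫ z, φ k z ∂K x) ^ 2 ∂μ),
        Real.sqrt_nonneg (∫ x, φ k x ^ 2 ∂μ), hgap']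
    linarith
  -- iterate
  have hφbound : ∀ k, ∫ x, φ k x ^ 2 ∂μ ≤ (1/4) * rgap ^ (2 * k) := by
    intro k
    induction k with
    | zero =>
      have hψ2int : Integrable (fun x => ψ 0 x ^ 2) μ := by
        refine (integrable_const (1:ℝ)).mono'
          (((hψmeas 0).pow measurable_const).aestronglyMeasurable) ?_
        refine Filter.Eventually.of_forall fun w => ?_
        rw [Real.norm_eq_abs, abs_pow, abs_of_nonneg (hψ0 0 w)]
        nlinarith [hψ0 0 w, hψ1 0 w]
      have h0 : ∫ x, φ 0 x ^ 2 ∂μ = ∫ x, ψ 0 x ^ 2 ∂μ - c 0 ^ 2 := by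
        rw [hφdef]
        simp only
        exact integral_sub_mean_sq μ (hψint 0 μ hμprob) hψ2int
      have hle : ∫ x, ψ 0 x ^ 2 ∂μ ≤ c 0 := by
        rw [hcdef]
        simp only
        refine integral_mono hψ2int (hψint 0 μ hμprob) fun x => ?_
        nlinarith [hψ0 0 x, hψ1 0 x]
      rw [h0, show 2 * 0 = 0 from rfl, pow_zero, mul_one]
      nlinarith [hc0 0, hc1 0, hle, sq_nonneg (c 0 - 1/2)]
    | succ k ih =>
      calc ∫ x, φ (k + 1) x ^ 2 ∂μ ≤ rgap ^ 2 * ∫ x, φ k x ^ 2 ∂μ := hKcontract k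
      _ ≤ rgap ^ 2 * ((1/4) * rgap ^ (2 * k)) := by
          nlinarith [sq_nonneg rgap, ih, pow_nonneg hr0.le (2 * k)]
      _ = (1/4) * rgap ^ (2 * (k + 1)) := by ring
  -- functions Fr and Frc
  set Fr : G × G → ℝ := fun q => α q.1 q.2 * ψ m q.2 + (1 - α q.1 q.2) * ψ m q.1 with hFrdef
  set Frc : G × G → ℝ := fun q => α q.1 q.2 * φ m q.2 + (1 - α q.1 q.2) * φ m q.1 with hFrcdef
  have h1mα0 : ∀ x y : G, (0:ℝ) ≤ 1 - α x y := fun x y => by nlinarith [hα1 x y]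
  have hFrm : Measurable Fr := by
    exact (hαm.mul ((hψmeas m).comp measurable_snd)).add
      ((measurable_const.sub hαm).mul ((hψmeas m).comp measurable_fst))
  have hFrcm : Measurable Frc := by
    exact (hαm.mul ((hφmeas m).comp measurable_snd)).add
      ((measurable_const.sub hαm).mul ((hφmeas m).comp measurable_fst))
  have hFr0 : ∀ q, 0 ≤ Fr q := by
    intro q
    exact add_nonneg (mul_nonneg (hα0 _ _) (hψ0 m _)) (mul_nonneg (h1mα0 _ _) (hψ0 m _))
  have hFr1 : ∀ q, Fr q ≤ 1 := by
    intro q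
    rw [hFrdef]
    simp only
    nlinarith [hψ0 m q.1, hψ1 m q.1, hψ0 m q.2, hψ1 m q.2, hα0 q.1 q.2, hα1 q.1 q.2]
  have hFrcabs : ∀ q, |Frc q| ≤ 1 := by
    intro q
    rw [hFrcdef, abs_le]
    constructor <;> simp only <;>
      nlinarith [abs_le.mp (hφabs m q.1), abs_le.mp (hφabs m q.2), hα0 q.1 q.2, hα1 q.1 q.2]
  -- value of the iterated kernel on A
  have hFval : ∀ q : G × G, (KaugP (m + 1) q) A = ENNReal.ofReal (Fr q) := by
    rintro ⟨x, y⟩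
    rw [hC m x y, Measure.add_apply, Measure.smul_apply, Measure.smul_apply,
      smul_eq_mul, smul_eq_mul,
      show (TAux P K m) y A = ENNReal.ofReal (ψ m y) from
        (ENNReal.ofReal_toReal (measure_ne_top _ _)).symm,
      show (TAux P K m) x A = ENNReal.ofReal (ψ m x) from
        (ENNReal.ofReal_toReal (measure_ne_top _ _)).symm,
      ← ENNReal.ofReal_mul (hα0 x y), ← ENNReal.ofReal_mul (h1mα0 x y),
      ← ENNReal.ofReal_add (mul_nonneg (hα0 x y) (hψ0 m y)) (mul_nonneg (h1mα0 x y) (hψ0 m x))]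
  -- integrability over ν
  have hgint : Integrable g ν := hgL2.integrable one_le_two
  have hFrint : Integrable Fr ν := by
    refine (integrable_const (1:ℝ)).mono' hFrm.aestronglyMeasurable ?_
    exact Filter.Eventually.of_forall fun q => by
      rw [Real.norm_eq_abs, abs_of_nonneg (hFr0 q)]; exact hFr1 q
  have hFrcint : Integrable Frc ν := by
    refine (integrable_const (1:ℝ)).mono' hFrcm.aestronglyMeasurable ?_
    exact Filter.Eventually.of_forall fun q => by rw [Real.norm_eq_abs]; exact hFrcabs q
  have hgFrint : Integrable (fun q => g q * Fr q) ν := by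
    have h := hgint.bdd_mul hFrm.aestronglyMeasurable
      (c := 1) (Filter.Eventually.of_forall fun q => by rw [Real.norm_eq_abs, abs_of_nonneg (hFr0 q)]; exact hFr1 q)
    simpa [mul_comm] using h
  have hg1int : Integrable (fun q => g q - 1) ν := hgint.sub (integrable_const 1)
  have hg1Frcint : Integrable (fun q => (g q - 1) * Frc q) ν := by
    have h := hg1int.bdd_mul hFrcm.aestronglyMeasurable
      (c := 1) (Filter.Eventually.of_forall fun q => by rw [Real.norm_eq_abs]; exact hFrcabs q)
    simpa [mul_comm] using h
  -- ∫ g dν = 1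
  have hgone : ∫ q, g q ∂ν = 1 := by
    have h1 : (1:ℝ≥0∞) = ∫⁻ q, ENNReal.ofReal (g q) ∂ν := by
      rw [← measure_univ (μ := η), hη, withDensity_apply _ MeasurableSet.univ,
        setLIntegral_univ]
    rw [← ofReal_integral_eq_lintegral_ofReal hgint
      (Filter.Eventually.of_forall fun q => hg0 q)] at h1
    have h2 := congrArg ENNReal.toReal h1
    rw [ENNReal.toReal_ofReal (integral_nonneg hg0)] at h2
    simpa using h2.symm
  -- value of the two measures
  have hbind' : ((η.bind fun q => KaugP (m + 1) q) A).toReal = ∫ q, g q * Fr q ∂ν := by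
    have hb : ((η.bind fun q => KaugP (m + 1) q) A)
        = ∫⁻ q, ENNReal.ofReal (g q * Fr q) ∂ν := by
      rw [Measure.bind_apply hA (KaugP (m + 1)).measurable.aemeasurable, hη,
        lintegral_withDensity_eq_lintegral_mul _ hgm.ennreal_ofReal
          (Kernel.measurable_coe _ hA)]
      refine lintegral_congr fun q => ?_
      show ENNReal.ofReal (g q) * (KaugP (m + 1) q) A = _
      rw [hFval q, ← ENNReal.ofReal_mul (hg0 q)]
    rw [hb, ← ofReal_integral_eq_lintegral_ofReal hgFrint
      (Filter.Eventually.of_forall fun q => mul_nonneg (hg0 q) (hFr0 q)),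
      ENNReal.toReal_ofReal (integral_nonneg fun q => mul_nonneg (hg0 q) (hFr0 q))]
  have hνA' : (ν A).toReal = ∫ q, Fr q ∂ν := by
    have hb : ν A = ∫⁻ q, ENNReal.ofReal (Fr q) ∂ν := by
      conv_lhs => rw [← hstatn m]
      rw [Measure.bind_apply hA (KaugP (m + 1)).measurable.aemeasurable]
      exact lintegral_congr fun q => hFval q
    rw [hb, ← ofReal_integral_eq_lintegral_ofReal hFrint
      (Filter.Eventually.of_forall fun q => hFr0 q),
      ENNReal.toReal_ofReal (integral_nonneg fun q => hFr0 q)]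
  -- the difference as an integral against (g - 1)
  have hzero : ∫ q, (g q - 1) ∂ν = 0 := by
    rw [integral_sub hgint (integrable_const 1), hgone, integral_const]
    simp
  have hFrFrc : ∀ q, Fr q = Frc q + c m := by
    intro q
    rw [hFrdef, hFrcdef, hφdef]
    simp only
    ring
  have hdiff : |(ν A).toReal - ((η.bind fun q => KaugP (m + 1) q) A).toReal|
      = |∫ q, (g q - 1) * Frc q ∂ν| := by
    rw [hνA', hbind']
    have h1 : ∫ q, (g q - 1) * Frc q ∂ν
        = ∫ q, g q * Fr q ∂ν - ∫ q, Fr q ∂ν := by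
      have e1 : ∀ q, (g q - 1) * Frc q = (g q * Fr q - Fr q) - (c m) * (g q - 1) := by
        intro q; rw [hFrFrc q]; ring
      calc ∫ q, (g q - 1) * Frc q ∂ν
          = ∫ q, ((g q * Fr q - Fr q) - (c m) * (g q - 1)) ∂ν :=
            integral_congr_ae (Filter.Eventually.of_forall fun q => e1 q)
        _ = ∫ q, (g q * Fr q - Fr q) ∂ν - ∫ q, (c m) * (g q - 1) ∂ν :=
            integral_sub (hgFrint.sub hFrint) (hg1int.const_mul _)
        _ = ∫ q, g q * Fr q ∂ν - ∫ q, Fr q ∂ν := by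
            rw [integral_sub hgFrint hFrint, integral_const_mul, hzero, mul_zero, sub_zero]
    rw [h1, abs_sub_comm]
  -- Cauchy–Schwarz
  have hpq : Real.HolderConjugate 2 2 := ⟨by norm_num, by norm_num, by norm_num⟩
  have h2eq : (ENNReal.ofReal (2:ℝ)) = (2 : ℝ≥0∞) := by
    rw [ENNReal.ofReal_ofNat]
  have hg1L2 : MemLp (fun q => g q - 1) (ENNReal.ofReal (2:ℝ)) ν := by
    rw [h2eq]; exact hgL2.sub (memLp_const 1)
  have hFrcL2 : MemLp Frc (ENNReal.ofReal (2:ℝ)) ν := by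
    rw [h2eq]
    exact MemLp.of_bound hFrcm.aestronglyMeasurable 1
      (Filter.Eventually.of_forall fun q => by rw [Real.norm_eq_abs]; exact hFrcabs q)
  have hCS := integral_mul_norm_le_Lp_mul_Lq hpq hg1L2 hFrcL2
  have habs : |∫ q, (g q - 1) * Frc q ∂ν| ≤ ∫ q, ‖g q - 1‖ * ‖Frc q‖ ∂ν := by
    have h0 := norm_integral_le_integral_norm (μ := ν) (fun q => (g q - 1) * Frc q)
    rw [Real.norm_eq_abs] at h0
    refine h0.trans (le_of_eq ?_)
    refine integral_congr_ae (Filter.Eventually.of_forall fun q => ?_)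
    show ‖(g q - 1) * Frc q‖ = ‖g q - 1‖ * ‖Frc q‖
    rw [norm_mul]
  have hCS2 : ∫ q, ‖g q - 1‖ * ‖Frc q‖ ∂ν
      ≤ Real.sqrt (∫ q, (g q - 1) ^ 2 ∂ν) * Real.sqrt (∫ q, Frc q ^ 2 ∂ν) := by
    have e1 : ∫ q, ‖g q - 1‖ ^ (2:ℝ) ∂ν = ∫ q, (g q - 1) ^ 2 ∂ν := by
      refine integral_congr_ae (Filter.Eventually.of_forall fun q => ?_)
      show ‖g q - 1‖ ^ (2:ℝ) = _
      rw [Real.rpow_two, Real.norm_eq_abs, sq_abs]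
    have e2 : ∫ q, ‖Frc q‖ ^ (2:ℝ) ∂ν = ∫ q, Frc q ^ 2 ∂ν := by
      refine integral_congr_ae (Filter.Eventually.of_forall fun q => ?_)
      show ‖Frc q‖ ^ (2:ℝ) = _
      rw [Real.rpow_two, Real.norm_eq_abs, sq_abs]
    rw [e1, e2] at hCS
    calc ∫ q, ‖g q - 1‖ * ‖Frc q‖ ∂ν
        ≤ (∫ q, (g q - 1) ^ 2 ∂ν) ^ ((1:ℝ) / 2) * (∫ q, Frc q ^ 2 ∂ν) ^ ((1:ℝ) / 2) := hCS
      _ = _ := by rw [← Real.sqrt_eq_rpow, ← Real.sqrt_eq_rpow]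
  -- bound the L² norm of Frc by that of φ m
  have hFrc2int : Integrable (fun q => Frc q ^ 2) ν := by
    refine (integrable_const (1:ℝ)).mono'
      ((hFrcm.pow measurable_const).aestronglyMeasurable) ?_
    refine Filter.Eventually.of_forall fun q => ?_
    rw [Real.norm_eq_abs, abs_pow]
    nlinarith [hFrcabs q, abs_nonneg (Frc q)]
  have hRHSm : Measurable fun q : G × G => α q.1 q.2 * φ m q.2 ^ 2
      + (1 - α q.1 q.2) * φ m q.1 ^ 2 := by
    exact (hαm.mul (((hφmeas m).pow measurable_const).comp measurable_snd)).add
      ((measurable_const.sub hαm).mul (((hφmeas m).pow measurable_const).comp measurable_fst))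
  have hRHS0 : ∀ q : G × G, 0 ≤ α q.1 q.2 * φ m q.2 ^ 2 + (1 - α q.1 q.2) * φ m q.1 ^ 2 :=
    fun q => add_nonneg (mul_nonneg (hα0 _ _) (sq_nonneg _))
      (mul_nonneg (h1mα0 _ _) (sq_nonneg _))
  have hRHSint : Integrable (fun q : G × G => α q.1 q.2 * φ m q.2 ^ 2
      + (1 - α q.1 q.2) * φ m q.1 ^ 2) ν := by
    refine (integrable_const (1:ℝ)).mono' hRHSm.aestronglyMeasurable ?_
    refine Filter.Eventually.of_forall fun q => ?_
    rw [Real.norm_eq_abs, abs_of_nonneg (hRHS0 q)]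
    have h2x : φ m q.1 ^ 2 ≤ 1 := by
      nlinarith [(abs_le.mp (hφabs m q.1)).1, (abs_le.mp (hφabs m q.1)).2]
    have h2y : φ m q.2 ^ 2 ≤ 1 := by
      nlinarith [(abs_le.mp (hφabs m q.2)).1, (abs_le.mp (hφabs m q.2)).2]
    nlinarith [hα0 q.1 q.2, hα1 q.1 q.2, sq_nonneg (φ m q.1), sq_nonneg (φ m q.2), h2x, h2y]
  have hFrc2 : ∫ q, Frc q ^ 2 ∂ν ≤ ∫ x, φ m x ^ 2 ∂μ := by
    have hpt : ∀ q : G × G, Frc q ^ 2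
        ≤ α q.1 q.2 * φ m q.2 ^ 2 + (1 - α q.1 q.2) * φ m q.1 ^ 2 := by
      intro q
      rw [hFrcdef]
      simp only
      nlinarith [mul_nonneg (mul_nonneg (hα0 q.1 q.2) (h1mα0 q.1 q.2))
        (sq_nonneg (φ m q.2 - φ m q.1)), hα0 q.1 q.2, hα1 q.1 q.2]
    have step1 : ∫ q, Frc q ^ 2 ∂ν ≤ ∫ q, (α q.1 q.2 * φ m q.2 ^ 2
        + (1 - α q.1 q.2) * φ m q.1 ^ 2) ∂ν := integral_mono hFrc2int hRHSint hpt
    have hv : Measurable fun w => ENNReal.ofReal (φ m w ^ 2) :=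
      ((hφmeas m).pow measurable_const).ennreal_ofReal
    have step2 : ∫ q, (α q.1 q.2 * φ m q.2 ^ 2 + (1 - α q.1 q.2) * φ m q.1 ^ 2) ∂ν
        = ∫ x, φ m x ^ 2 ∂μ := by
      have e1 : ∫⁻ q, ENNReal.ofReal (α q.1 q.2 * φ m q.2 ^ 2
          + (1 - α q.1 q.2) * φ m q.1 ^ 2) ∂ν = ∫⁻ x, ENNReal.ofReal (φ m x ^ 2) ∂μ := by
        rw [hν, Measure.lintegral_compProd hRHSm.ennreal_ofReal]
        have e2 : ∀ x y : G, ENNReal.ofReal (α x y * φ m y ^ 2 + (1 - α x y) * φ m x ^ 2)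
            = ENNReal.ofReal (α x y) * ENNReal.ofReal (φ m y ^ 2)
              + ENNReal.ofReal (1 - α x y) * ENNReal.ofReal (φ m x ^ 2) := by
          intro x y
          rw [ENNReal.ofReal_add (mul_nonneg (hα0 x y) (sq_nonneg _))
            (mul_nonneg (h1mα0 x y) (sq_nonneg _)), ENNReal.ofReal_mul (hα0 x y),
            ENNReal.ofReal_mul (h1mα0 x y)]
        simp_rw [e2]
        exact key2 _ hv
      rw [← ofReal_integral_eq_lintegral_ofReal hRHSint
          (Filter.Eventually.of_forall hRHS0), ← ofReal_integral_eq_lintegral_ofReal (hφ2int m)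
          (Filter.Eventually.of_forall fun x => sq_nonneg _)] at e1
      have := congrArg ENNReal.toReal e1
      rwa [ENNReal.toReal_ofReal (integral_nonneg hRHS0),
        ENNReal.toReal_ofReal (integral_nonneg fun x => sq_nonneg _)] at this
    linarith [step1, le_of_eq step2]
  -- put everything together
  have hsqrt : Real.sqrt (∫ q, Frc q ^ 2 ∂ν) ≤ 1 / 2 * rgap ^ m := by
    have h1 : ∫ q, Frc q ^ 2 ∂ν ≤ (1 / 2 * rgap ^ m) ^ 2 := by
      have : (1/4 : ℝ) * rgap ^ (2 * m) = (1 / 2 * rgap ^ m) ^ 2 := by ring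
      linarith [hFrc2, hφbound m, this.symm.le, this.le]
    calc Real.sqrt (∫ q, Frc q ^ 2 ∂ν) ≤ Real.sqrt ((1 / 2 * rgap ^ m) ^ 2) :=
          Real.sqrt_le_sqrt h1
      _ = 1 / 2 * rgap ^ m := Real.sqrt_sq (by positivity)
  have hE : (eLpNorm (fun q => g q - 1) 2 ν).toReal
      = Real.sqrt (∫ q, (g q - 1) ^ 2 ∂ν) := by
    have hsub : MemLp (fun q => g q - 1) 2 ν := by exact hgL2.sub (memLp_const 1)
    rw [eLpNorm_two_eq_sqrt hsub, ENNReal.toReal_ofReal (Real.sqrt_nonneg _)]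
  rw [hdiff, hE]
  calc |∫ q, (g q - 1) * Frc q ∂ν|
      ≤ ∫ q, ‖g q - 1‖ * ‖Frc q‖ ∂ν := habs
    _ ≤ Real.sqrt (∫ q, (g q - 1) ^ 2 ∂ν) * Real.sqrt (∫ q, Frc q ^ 2 ∂ν) := hCS2
    _ ≤ Real.sqrt (∫ q, (g q - 1) ^ 2 ∂ν) * (1 / 2 * rgap ^ m) :=
        mul_le_mul_of_nonneg_left hsqrt (Real.sqrt_nonneg _)
    _ = 1 / (2 * rgap) * Real.sqrt (∫ q, (g q - 1) ^ 2 ∂ν) * rgap ^ (m + 1) := by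
        field_simp
        ring
end
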